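/- arXiv:1203.5480 — 4 statements merged into one kernel-verified Lean document; each statement's English description precedes it below -/
import Mathlib

section
/- Let λ ≥ 0 and let f be a bi-univalent function of the class R_σ(λ, φ), i.e. f is bi-univalent with inverse extension F and both (1−λ)f(z)/z + λf'(z) ≺ φ(z) and (1−λ)F(w)/w + λF'(w) ≺ φ(w). Then the second Taylor coefficient of f satisfies |a₂| ≤ √((B₁ + |B₁ − B₂|)/(1 + 2λ)). -/
open Metric Set Complex

noncomputable section

/-- `g` is subordinate to `h` on the unit disk: there is an analytic `ω : 𝔻 → 𝔻`
with `ω 0 = 0` such that `g = h ∘ ω` on `𝔻`. -/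
def Subordinate (g h : ℂ → ℂ) : Prop :=
  ∃ ω : ℂ → ℂ, DifferentiableOn ℂ ω (ball 0 1) ∧ ω 0 = 0 ∧
    (∀ z ∈ ball (0 : ℂ) 1, ω z ∈ ball (0 : ℂ) 1) ∧
    ∀ z ∈ ball (0 : ℂ) 1, g z = h (ω z)

section Auxiliary

lemma an_deriv {f : ℂ → ℂ} {x : ℂ} (h : AnalyticAt ℂ f x) : AnalyticAt ℂ (deriv f) x :=
  (AnalyticOnNhd.deriv (fun y (hy : y ∈ ({x} : Set ℂ)) => by
    rw [Set.mem_singleton_iff.mp hy]; exact h)) x rfl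

lemma an_id_mul {q : ℂ → ℂ} (h : AnalyticAt ℂ q 0) :
    AnalyticAt ℂ (fun z => z * q z) 0 := analyticAt_id.mul h

lemma ederiv_mul {p q : ℂ → ℂ} (hp : AnalyticAt ℂ p 0) (hq : AnalyticAt ℂ q 0) :
    deriv (fun z => p z * q z) =ᶠ[nhds 0] fun z => deriv p z * q z + p z * deriv q z := by
  filter_upwards [hp.eventually_analyticAt, hq.eventually_analyticAt] with z hz hz'
  exact deriv_mul hz.differentiableAt hz'.differentiableAt

lemma ederiv_add {p q : ℂ → ℂ} (hp : AnalyticAt ℂ p 0) (hq : AnalyticAt ℂ q 0) :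
    deriv (fun z => p z + q z) =ᶠ[nhds 0] fun z => deriv p z + deriv q z := by
  filter_upwards [hp.eventually_analyticAt, hq.eventually_analyticAt] with z hz hz'
  exact deriv_add hz.differentiableAt hz'.differentiableAt

lemma ederiv_cmul (c : ℂ) {p : ℂ → ℂ} (hp : AnalyticAt ℂ p 0) :
    deriv (fun z => c * p z) =ᶠ[nhds 0] fun z => c * deriv p z := by
  filter_upwards [hp.eventually_analyticAt] with z hz
  exact deriv_const_mul c hz.differentiableAt

lemma ederiv_comp {p q : ℂ → ℂ} (hp : AnalyticAt ℂ p (q 0)) (hq : AnalyticAt ℂ q 0) :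
    deriv (fun z => p (q z)) =ᶠ[nhds 0] fun z => deriv p (q z) * deriv q z := by
  filter_upwards [hq.eventually_analyticAt,
    (hq.continuousAt.tendsto).eventually hp.eventually_analyticAt] with z hz hz'
  exact deriv_comp z hz'.differentiableAt hz.differentiableAt

lemma ederiv_id_mul {p : ℂ → ℂ} (hp : AnalyticAt ℂ p 0) :
    deriv (fun z => z * p z) =ᶠ[nhds 0] fun z => p z + z * deriv p z := by
  filter_upwards [hp.eventually_analyticAt] with z hz
  rw [deriv_fun_mul differentiableAt_fun_id hz.differentiableAt, deriv_id'', one_mul]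

lemma d1_id_mul {p : ℂ → ℂ} (hp : AnalyticAt ℂ p 0) :
    deriv (fun z => z * p z) 0 = p 0 := by
  have := (ederiv_id_mul hp).eq_of_nhds
  simpa using this

lemma d2_id_mul {p : ℂ → ℂ} (hp : AnalyticAt ℂ p 0) :
    deriv (deriv (fun z => z * p z)) 0 = 2 * deriv p 0 := by
  rw [(ederiv_id_mul hp).deriv_eq]
  rw [deriv_fun_add hp.differentiableAt ((an_id_mul (an_deriv hp)).differentiableAt)]
  rw [d1_id_mul (an_deriv hp)]; ring

lemma d3_id_mul {p : ℂ → ℂ} (hp : AnalyticAt ℂ p 0) :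
    deriv (deriv (deriv (fun z => z * p z))) 0 = 3 * deriv (deriv p) 0 := by
  have E2 : deriv (deriv (fun z => z * p z)) =ᶠ[nhds 0]
      fun z => deriv p z + (deriv p z + z * deriv (deriv p) z) := by
    refine ((ederiv_id_mul hp).deriv).trans ?_
    have := ederiv_add hp (an_id_mul (an_deriv hp))
    refine this.trans ?_
    filter_upwards [(ederiv_id_mul (an_deriv hp))] with z hz
    rw [hz]
  rw [E2.deriv_eq]
  have h1 : AnalyticAt ℂ (deriv p) 0 := an_deriv hp
  have h2 : AnalyticAt ℂ (fun z => deriv p z + z * deriv (deriv p) z) 0 :=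
    h1.add (an_id_mul (an_deriv h1))
  rw [deriv_fun_add h1.differentiableAt h2.differentiableAt,
    deriv_fun_add h1.differentiableAt ((an_id_mul (an_deriv h1)).differentiableAt),
    d1_id_mul (an_deriv h1)]
  ring

lemma d2_add {a b : ℂ → ℂ} (ha : AnalyticAt ℂ a 0) (hb : AnalyticAt ℂ b 0) :
    deriv (deriv (fun z => a z + b z)) 0 = deriv (deriv a) 0 + deriv (deriv b) 0 := by
  rw [(ederiv_add ha hb).deriv_eq]
  exact deriv_add (an_deriv ha).differentiableAt (an_deriv hb).differentiableAt

lemma d3_add {a b : ℂ → ℂ} (ha : AnalyticAt ℂ a 0) (hb : AnalyticAt ℂ b 0) :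
    deriv (deriv (deriv (fun z => a z + b z))) 0
      = deriv (deriv (deriv a)) 0 + deriv (deriv (deriv b)) 0 := by
  rw [(ederiv_add ha hb).deriv.deriv_eq]
  exact d2_add (an_deriv ha) (an_deriv hb)

lemma d2_cmul (c : ℂ) {a : ℂ → ℂ} (ha : AnalyticAt ℂ a 0) :
    deriv (deriv (fun z => c * a z)) 0 = c * deriv (deriv a) 0 := by
  rw [(ederiv_cmul c ha).deriv_eq]
  exact deriv_const_mul c (an_deriv ha).differentiableAt

lemma d3_cmul (c : ℂ) {a : ℂ → ℂ} (ha : AnalyticAt ℂ a 0) :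
    deriv (deriv (deriv (fun z => c * a z))) 0 = c * deriv (deriv (deriv a)) 0 := by
  rw [(ederiv_cmul c ha).deriv.deriv_eq]
  exact d2_cmul c (an_deriv ha)

lemma comp_d1 {p u : ℂ → ℂ} (hp : AnalyticAt ℂ p (u 0)) (hu : AnalyticAt ℂ u 0) :
    deriv (fun z => p (u z)) 0 = deriv p (u 0) * deriv u 0 :=
  deriv_comp 0 hp.differentiableAt hu.differentiableAt

lemma comp_d2 {p u : ℂ → ℂ} (hp : AnalyticAt ℂ p (u 0)) (hu : AnalyticAt ℂ u 0) :
    deriv (deriv (fun z => p (u z))) 0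
      = deriv (deriv p) (u 0) * (deriv u 0) ^ 2 + deriv p (u 0) * deriv (deriv u) 0 := by
  rw [(ederiv_comp hp hu).deriv_eq]
  have hc : DifferentiableAt ℂ (fun z => deriv p (u z)) 0 :=
    ((an_deriv hp).comp hu).differentiableAt
  rw [deriv_fun_mul hc (an_deriv hu).differentiableAt]
  rw [comp_d1 (an_deriv hp) hu]
  ring

/-- Coefficient identities extracted from one subordination side. -/
lemma side (lam : ℝ) {f φ g : ℂ → ℂ}
    (hf : DifferentiableOn ℂ f (ball 0 1)) (hf0 : f 0 = 0)
    (hφ : DifferentiableOn ℂ φ (ball 0 1))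
    (hgf : ∀ z ∈ ball (0 : ℂ) 1, z ≠ 0 →
      g z = (1 - (lam : ℂ)) * (f z / z) + (lam : ℂ) * deriv f z)
    (hgsub : Subordinate g φ) :
    ∃ u : ℂ → ℂ, DifferentiableOn ℂ u (ball 0 1) ∧ u 0 = 0 ∧
      (∀ z ∈ ball (0 : ℂ) 1, u z ∈ ball (0 : ℂ) 1) ∧
      2 * (deriv φ 0 * deriv u 0) = (1 + (lam : ℂ)) * deriv (deriv f) 0 ∧
      3 * (deriv (deriv φ) 0 * (deriv u 0) ^ 2 + deriv φ 0 * deriv (deriv u) 0)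
        = (1 + 2 * (lam : ℂ)) * deriv (deriv (deriv f)) 0 := by
  obtain ⟨u, hud, hu0, humap, hgu⟩ := hgsub
  have hmem : ball (0 : ℂ) 1 ∈ nhds (0 : ℂ) := isOpen_ball.mem_nhds (mem_ball_self one_pos)
  have hfA : AnalyticAt ℂ f 0 := hf.analyticAt hmem
  have huA : AnalyticAt ℂ u 0 := hud.analyticAt hmem
  have hφA : AnalyticAt ℂ φ (u 0) := by rw [hu0]; exact hφ.analyticAt hmem
  have hPA : AnalyticAt ℂ (fun z => φ (u z)) 0 := hφA.comp huA
  have EqF : (fun z => z * φ (u z)) =ᶠ[nhds 0]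
      fun z => (1 - (lam : ℂ)) * f z + (lam : ℂ) * (z * deriv f z) := by
    filter_upwards [hmem] with z hz
    rcases eq_or_ne z 0 with rfl | hz0
    · simp [hf0]
    · rw [← hgu z hz, hgf z hz hz0]
      field_simp
  have hRa : AnalyticAt ℂ (fun z => (1 - (lam : ℂ)) * f z) 0 := analyticAt_const.mul hfA
  have hRb : AnalyticAt ℂ (fun z => (lam : ℂ) * (z * deriv f z)) 0 :=
    analyticAt_const.mul (an_id_mul (an_deriv hfA))
  refine ⟨u, hud, hu0, humap, ?_, ?_⟩
  · have h := EqF.deriv.deriv_eq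
    rw [d2_id_mul hPA, d2_add hRa hRb, d2_cmul _ hfA,
      d2_cmul _ (an_id_mul (an_deriv hfA)), d2_id_mul (an_deriv hfA)] at h
    have hP1 : deriv (fun z => φ (u z)) 0 = deriv φ (u 0) * deriv u 0 := comp_d1 hφA huA
    rw [hP1, hu0] at h
    linear_combination h
  · have h := EqF.deriv.deriv.deriv_eq
    rw [d3_id_mul hPA, d3_add hRa hRb, d3_cmul _ hfA,
      d3_cmul _ (an_id_mul (an_deriv hfA)), d3_id_mul (an_deriv hfA)] at h
    have hP2 := comp_d2 hφA huA
    rw [hP2, hu0] at h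
    linear_combination h
lemma normSq_key (c w : ℂ) :
    Complex.normSq (1 - (starRingEnd ℂ) c * w) - Complex.normSq (w - c)
      = (1 - Complex.normSq c) * (1 - Complex.normSq w) := by
  simp only [Complex.normSq_apply, Complex.sub_re, Complex.sub_im, Complex.mul_re,
    Complex.mul_im, Complex.one_re, Complex.one_im, Complex.conj_re, Complex.conj_im]
  ring

lemma schwarz_pick_aux {ψ : ℂ → ℂ}
    (hψd : DifferentiableOn ℂ ψ (ball 0 1))
    (hψb : ∀ z ∈ ball (0:ℂ) 1, ‖ψ z‖ ≤ 1)
    (hψa : AnalyticAt ℂ ψ 0) :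
    ‖deriv ψ 0‖ ≤ 1 - ‖ψ 0‖ ^ 2 := by
  by_cases hex : ∃ z₀ ∈ ball (0:ℂ) 1, ‖ψ z₀‖ = 1
  · obtain ⟨z₀, hz₀, habs⟩ := hex
    have hmax : IsMaxOn (norm ∘ ψ) (ball 0 1) z₀ := by
      intro z hz
      simp only [Function.comp_apply, habs]
      exact hψb z hz
    have heq := eqOn_of_isPreconnected_of_isMaxOn_norm (convex_ball (0:ℂ) 1).isPreconnected
      isOpen_ball hψd hz₀ hmax
    have hev : ψ =ᶠ[nhds 0] fun _ => ψ z₀ := by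
      filter_upwards [isOpen_ball.mem_nhds (mem_ball_self one_pos)] with z hz
      exact heq hz
    have hd0 : deriv ψ 0 = 0 := by rw [hev.deriv_eq, deriv_const]
    have h0 : ‖ψ 0‖ = 1 := by
      rw [heq (mem_ball_self one_pos)]; exact habs
    rw [hd0, h0]; simp
  · push_neg at hex
    have hlt : ∀ z ∈ ball (0:ℂ) 1, ‖ψ z‖ < 1 :=
      fun z hz => lt_of_le_of_ne (hψb z hz) (hex z hz)
    set c := ψ 0 with hc
    have hcl : ‖c‖ < 1 := hlt 0 (mem_ball_self one_pos)
    have hden : ∀ w : ℂ, ‖w‖ < 1 → 1 - (starRingEnd ℂ) c * w ≠ 0 := by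
      intro w hw h
      have h1 : (starRingEnd ℂ) c * w = 1 := by linear_combination -h
      have := congrArg norm h1
      rw [norm_mul, norm_one, Complex.norm_conj] at this
      nlinarith [norm_nonneg c, norm_nonneg w]
    set h : ℂ → ℂ := fun z => (ψ z - c) * (1 - (starRingEnd ℂ) c * ψ z)⁻¹ with hdefh
    have hhd : DifferentiableOn ℂ h (ball 0 1) := by
      apply (hψd.sub_const c).mul
      exact ((differentiableOn_const 1).sub (hψd.const_mul _)).inv
        (fun z hz => hden (ψ z) (hlt z hz))
    have h00 : h 0 = 0 := by simp [hdefh, hc]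
    have hkey : ∀ w : ℂ, ‖w‖ < 1 →
        ‖w - c‖ < ‖1 - (starRingEnd ℂ) c * w‖ := by
      intro w hw
      apply lt_of_pow_lt_pow_left₀ 2 (norm_nonneg _)
      rw [Complex.sq_norm, Complex.sq_norm]
      have h1 : Complex.normSq c < 1 := by
        rw [← Complex.sq_norm]; nlinarith [norm_nonneg c]
      have h2 : Complex.normSq w < 1 := by
        rw [← Complex.sq_norm]; nlinarith [norm_nonneg w]
      nlinarith [normSq_key c w]
    have hmaps2 : MapsTo h (ball 0 1) (ball (h 0) 1) := by
      rw [h00]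
      intro z hz
      rw [mem_ball_zero_iff, hdefh]
      have hd := hkey (ψ z) (hlt z hz)
      have hpos : 0 < ‖1 - (starRingEnd ℂ) c * ψ z‖ :=
        norm_pos_iff.mpr (hden (ψ z) (hlt z hz))
      simp only [norm_mul, norm_inv]
      rw [← div_eq_mul_inv]
      exact (div_lt_one hpos).mpr hd
    have hsch : ‖deriv h 0‖ ≤ 1 := by
      have := norm_deriv_le_div_of_mapsTo_ball hhd (hmaps2.mono_right ball_subset_closedBall) one_pos
      simpa using this
    have hψd0 : DifferentiableAt ℂ ψ 0 := hψa.differentiableAt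
    have hd2 : DifferentiableAt ℂ (fun z => (1 - (starRingEnd ℂ) c * ψ z)⁻¹) 0 := by
      apply DifferentiableAt.inv
      · exact (differentiableAt_const 1).sub (hψd0.const_mul _)
      · exact hden (ψ 0) hcl
    have hderh : deriv h 0 = deriv ψ 0 * (1 - (starRingEnd ℂ) c * c)⁻¹ := by
      rw [hdefh]
      rw [deriv_fun_mul (hψd0.sub_const c) hd2]
      rw [deriv_sub_const, ← hc, sub_self, zero_mul, add_zero]
    have habs1 : ‖1 - (starRingEnd ℂ) c * c‖ = 1 - ‖c‖ ^ 2 := by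
      have : 1 - (starRingEnd ℂ) c * c = ((1 - Complex.normSq c : ℝ) : ℂ) := by
        rw [mul_comm, Complex.mul_conj]; push_cast; ring
      rw [this, Complex.norm_real, Real.norm_eq_abs, _root_.abs_of_nonneg (by
        rw [← Complex.sq_norm]; nlinarith [norm_nonneg c] : (0:ℝ) ≤ 1 - Complex.normSq c),
        ← Complex.sq_norm]
    have := hsch
    rw [hderh, norm_mul, norm_inv, habs1] at this
    have hpos : (0:ℝ) < 1 - ‖c‖ ^ 2 := by nlinarith [norm_nonneg c]
    calc ‖deriv ψ 0‖
        = ‖deriv ψ 0‖ * (1 - ‖c‖ ^ 2)⁻¹ * (1 - ‖c‖ ^ 2) := by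
          field_simp
      _ ≤ 1 * (1 - ‖c‖ ^ 2) := by
          apply mul_le_mul_of_nonneg_right this hpos.le
      _ = 1 - ‖c‖ ^ 2 := one_mul _

lemma dslope_rep {ω : ℂ → ℂ} (hω0 : ω 0 = 0) : ω = fun z => z * dslope ω 0 z := by
  funext z
  rcases eq_or_ne z 0 with rfl | hz
  · simp [hω0]
  · rw [dslope_of_ne ω hz, slope_def_field]
    field_simp [hω0]
    rw [hω0, sub_zero, sub_zero, mul_comm]
lemma inverse_coeffs {f F : ℂ → ℂ}
    (hfA : AnalyticAt ℂ f 0) (hFA : AnalyticAt ℂ F 0) (hf0 : f 0 = 0) (hf1 : deriv f 0 = 1)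
    (hFf : ∀ᶠ z in nhds (0 : ℂ), F (f z) = z) :
    deriv (deriv F) 0 = - deriv (deriv f) 0 ∧
    deriv (deriv (deriv F)) 0 = 3 * (deriv (deriv f) 0) ^ 2 - deriv (deriv (deriv f)) 0 := by
  have hFfa : AnalyticAt ℂ F (f 0) := by rw [hf0]; exact hFA
  have E0 : (fun z => F (f z)) =ᶠ[nhds 0] fun z => z := hFf
  have E1 : (fun z => deriv F (f z) * deriv f z) =ᶠ[nhds 0] fun _ => (1 : ℂ) := by
    refine ((ederiv_comp hFfa hfA).symm.trans E0.deriv).trans ?_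
    filter_upwards with z
    exact deriv_id z
  have hF'0 : deriv F 0 = 1 := by
    have h := E1.eq_of_nhds
    simp only [hf0, hf1, mul_one] at h
    exact h
  have hA : AnalyticAt ℂ (fun z => deriv F (f z)) 0 := (an_deriv hFfa).comp hfA
  have E2 : (fun z => deriv (deriv F) (f z) * deriv f z * deriv f z
      + deriv F (f z) * deriv (deriv f) z) =ᶠ[nhds 0] fun _ => (0 : ℂ) := by
    have e := ederiv_mul hA (an_deriv hfA)
    have e2 := ederiv_comp (an_deriv hFfa) hfA
    have e3 : (fun z => deriv (deriv F) (f z) * deriv f z * deriv f z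
        + deriv F (f z) * deriv (deriv f) z) =ᶠ[nhds 0]
        deriv (fun z => deriv F (f z) * deriv f z) := by
      filter_upwards [e, e2] with z h h2
      rw [h, h2]
    refine (e3.trans E1.deriv).trans ?_
    filter_upwards with z
    rw [deriv_const]
  have hA2 : deriv (deriv F) 0 = - deriv (deriv f) 0 := by
    have h := E2.eq_of_nhds
    simp only [hf0, hf1, hF'0, mul_one, one_mul] at h
    linear_combination h
  refine ⟨hA2, ?_⟩
  have hq1 : AnalyticAt ℂ (fun z => deriv (deriv F) (f z)) 0 :=
    (an_deriv (an_deriv hFfa)).comp hfA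
  have hq1m : AnalyticAt ℂ (fun z => deriv (deriv F) (f z) * deriv f z) 0 :=
    hq1.mul (an_deriv hfA)
  have hT1 : AnalyticAt ℂ (fun z => deriv (deriv F) (f z) * deriv f z * deriv f z) 0 :=
    hq1m.mul (an_deriv hfA)
  have hT2 : AnalyticAt ℂ (fun z => deriv F (f z) * deriv (deriv f) z) 0 :=
    hA.mul (an_deriv (an_deriv hfA))
  have h3 : deriv (fun z => deriv (deriv F) (f z) * deriv f z * deriv f z
      + deriv F (f z) * deriv (deriv f) z) 0 = 0 := by
    rw [E2.deriv_eq, deriv_const]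
  rw [deriv_fun_add hT1.differentiableAt hT2.differentiableAt,
    deriv_fun_mul hq1m.differentiableAt (an_deriv hfA).differentiableAt,
    deriv_fun_mul hq1.differentiableAt (an_deriv hfA).differentiableAt,
    deriv_fun_mul hA.differentiableAt (an_deriv (an_deriv hfA)).differentiableAt,
    comp_d1 (an_deriv (an_deriv hFfa)) hfA,
    comp_d1 (an_deriv hFfa) hfA, hf0, hf1, hF'0] at h3
  linear_combination h3 - 3 * deriv (deriv f) 0 * hA2

lemma schwarz_coeffs {ω : ℂ → ℂ} (hω : DifferentiableOn ℂ ω (ball 0 1)) (hω0 : ω 0 = 0)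
    (hmap : ∀ z ∈ ball (0 : ℂ) 1, ω z ∈ ball (0 : ℂ) 1) :
    ‖deriv ω 0‖ ≤ 1 ∧
    ‖deriv (deriv ω) 0‖ ≤ 2 * (1 - ‖deriv ω 0‖ ^ 2) := by
  have hmem : ball (0 : ℂ) 1 ∈ nhds (0 : ℂ) := isOpen_ball.mem_nhds (mem_ball_self one_pos)
  have hψd : DifferentiableOn ℂ (dslope ω 0) (ball 0 1) :=
    (differentiableOn_dslope hmem).mpr hω
  have hψa : AnalyticAt ℂ (dslope ω 0) 0 := hψd.analyticAt hmem
  have hmaps : MapsTo ω (ball 0 1) (ball (ω 0) 1) := by rw [hω0]; exact hmap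
  have hψb : ∀ z ∈ ball (0 : ℂ) 1, ‖dslope ω 0 z‖ ≤ 1 := fun z hz => by
    simpa using norm_dslope_le_div_of_mapsTo_ball hω (hmaps.mono_right ball_subset_closedBall) hz
  have hψ0 : dslope ω 0 0 = deriv ω 0 := dslope_same ω 0
  constructor
  · rw [← hψ0]; exact hψb 0 (mem_ball_self one_pos)
  · have hd2 : deriv (deriv ω) 0 = 2 * deriv (dslope ω 0) 0 := by
      conv_lhs => rw [dslope_rep hω0]
      exact d2_id_mul hψa
    have main := schwarz_pick_aux hψd hψb hψa
    rw [hd2, norm_mul, Complex.norm_two, ← hψ0]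
    linarith

end Auxiliary

set_option maxHeartbeats 1000000 in
theorem stmt0 (lam : ℝ) (hlam : 0 ≤ lam)
    (f F : ℂ → ℂ)
    (hf : DifferentiableOn ℂ f (ball 0 1)) (hf0 : f 0 = 0) (hf1 : deriv f 0 = 1)
    (hfi : InjOn f (ball 0 1))
    (hF : DifferentiableOn ℂ F (ball 0 1)) (hF0 : F 0 = 0) (hFi : InjOn F (ball 0 1))
    (hFf : ∀ᶠ z in nhds (0 : ℂ), F (f z) = z)
    (φ : ℂ → ℂ) (B₁ B₂ : ℝ)
    (hφ : DifferentiableOn ℂ φ (ball 0 1)) (hφ0 : φ 0 = 1)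
    (hB₁ : 0 < B₁) (hφ1 : deriv φ 0 = (B₁ : ℂ)) (hφ2 : iteratedDeriv 2 φ 0 = 2 * (B₂ : ℂ))
    (g : ℂ → ℂ) (hg0 : g 0 = 1)
    (hgf : ∀ z ∈ ball (0 : ℂ) 1, z ≠ 0 →
      g z = (1 - (lam : ℂ)) * (f z / z) + (lam : ℂ) * deriv f z)
    (hgsub : Subordinate g φ)
    (G : ℂ → ℂ) (hG0 : G 0 = 1)
    (hGF : ∀ w ∈ ball (0 : ℂ) 1, w ≠ 0 →
      G w = (1 - (lam : ℂ)) * (F w / w) + (lam : ℂ) * deriv F w)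
    (hGsub : Subordinate G φ) :
    ‖iteratedDeriv 2 f 0 / 2‖ ≤ Real.sqrt ((B₁ + |B₁ - B₂|) / (1 + 2 * lam)) := by
  have hmem : ball (0 : ℂ) 1 ∈ nhds (0 : ℂ) := isOpen_ball.mem_nhds (mem_ball_self one_pos)
  have hfA : AnalyticAt ℂ f 0 := hf.analyticAt hmem
  have hFA : AnalyticAt ℂ F 0 := hF.analyticAt hmem
  obtain ⟨u, hud, hu0, humap, F1, F2⟩ := side lam hf hf0 hφ hgf hgsub
  obtain ⟨v, hvd, hv0, hvmap, G1, G2⟩ := side lam hF hF0 hφ hGF hGsub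
  obtain ⟨hA2, hA3⟩ := inverse_coeffs hfA hFA hf0 hf1 hFf
  have hφd2 : deriv (deriv φ) 0 = 2 * (B₂ : ℂ) := by
    rw [← hφ2, iteratedDeriv_succ, iteratedDeriv_one]
  rw [hφ1] at F1 G1
  rw [hφ1, hφd2] at F2 G2
  rw [hA2] at G1
  rw [hA3] at G2
  have Key : (1 + 2 * (lam : ℂ)) * (deriv (deriv f) 0) ^ 2
      = 2 * (B₂ : ℂ) * (deriv u 0) ^ 2 + 2 * (B₂ : ℂ) * (deriv v 0) ^ 2
        + (B₁ : ℂ) * (deriv (deriv u) 0) + (B₁ : ℂ) * (deriv (deriv v) 0) := by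
    linear_combination (-(1 : ℂ)/3) * F2 + (-(1 : ℂ)/3) * G2
  have h1lam : ‖1 + (lam : ℂ)‖ = 1 + lam := by
    rw [show (1 + (lam : ℂ)) = ((1 + lam : ℝ) : ℂ) by push_cast; ring, Complex.norm_real, Real.norm_eq_abs]
    exact _root_.abs_of_pos (by linarith)
  have h12lam : ‖1 + 2 * (lam : ℂ)‖ = 1 + 2 * lam := by
    rw [show (1 + 2 * (lam : ℂ)) = ((1 + 2 * lam : ℝ) : ℂ) by push_cast; ring,
      Complex.norm_real, Real.norm_eq_abs]
    exact _root_.abs_of_pos (by linarith)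
  have e1 : 2 * (B₁ * ‖deriv u 0‖)
      = (1 + lam) * ‖deriv (deriv f) 0‖ := by
    have h := congrArg norm F1
    rwa [norm_mul, norm_mul, Complex.norm_two, Complex.norm_real, Real.norm_eq_abs, _root_.abs_of_pos hB₁,
      norm_mul, h1lam] at h
  have e2 : 2 * (B₁ * ‖deriv v 0‖)
      = (1 + lam) * ‖deriv (deriv f) 0‖ := by
    have h := congrArg norm G1
    rwa [norm_mul, norm_mul, Complex.norm_two, Complex.norm_real, Real.norm_eq_abs, _root_.abs_of_pos hB₁,
      norm_mul, h1lam, norm_neg] at h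
  have habsuv : ‖deriv v 0‖ = ‖deriv u 0‖ := by
    have h2B : (2 * B₁ : ℝ) ≠ 0 := by positivity
    apply mul_left_cancel₀ h2B
    linear_combination e2 - e1
  have tineq : ‖2 * (B₂ : ℂ) * (deriv u 0) ^ 2 + 2 * (B₂ : ℂ) * (deriv v 0) ^ 2
      + (B₁ : ℂ) * (deriv (deriv u) 0) + (B₁ : ℂ) * (deriv (deriv v) 0)‖
      ≤ 2 * |B₂| * ‖deriv u 0‖ ^ 2 + 2 * |B₂| * ‖deriv v 0‖ ^ 2
        + B₁ * ‖deriv (deriv u) 0‖ + B₁ * ‖deriv (deriv v) 0‖ := by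
    calc ‖2 * (B₂ : ℂ) * (deriv u 0) ^ 2 + 2 * (B₂ : ℂ) * (deriv v 0) ^ 2
          + (B₁ : ℂ) * (deriv (deriv u) 0) + (B₁ : ℂ) * (deriv (deriv v) 0)‖
        ≤ ‖2 * (B₂ : ℂ) * (deriv u 0) ^ 2 + 2 * (B₂ : ℂ) * (deriv v 0) ^ 2
          + (B₁ : ℂ) * (deriv (deriv u) 0)‖ + ‖(B₁ : ℂ) * (deriv (deriv v) 0)‖ :=
          norm_add_le _ _
      _ ≤ (‖2 * (B₂ : ℂ) * (deriv u 0) ^ 2 + 2 * (B₂ : ℂ) * (deriv v 0) ^ 2‖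
          + ‖(B₁ : ℂ) * (deriv (deriv u) 0)‖)
          + ‖(B₁ : ℂ) * (deriv (deriv v) 0)‖ :=
          add_le_add_left (norm_add_le _ _) _
      _ ≤ ((‖2 * (B₂ : ℂ) * (deriv u 0) ^ 2‖
          + ‖2 * (B₂ : ℂ) * (deriv v 0) ^ 2‖)
          + ‖(B₁ : ℂ) * (deriv (deriv u) 0)‖)
          + ‖(B₁ : ℂ) * (deriv (deriv v) 0)‖ :=
          by gcongr; exact norm_add_le _ _
      _ = 2 * |B₂| * ‖deriv u 0‖ ^ 2 + 2 * |B₂| * ‖deriv v 0‖ ^ 2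
          + B₁ * ‖deriv (deriv u) 0‖ + B₁ * ‖deriv (deriv v) 0‖ := by
          simp only [norm_mul, norm_pow, Complex.norm_two, Complex.norm_real, Real.norm_eq_abs,
            _root_.abs_of_pos hB₁]
  have main : (1 + 2 * lam) * ‖deriv (deriv f) 0‖ ^ 2
      ≤ 2 * |B₂| * ‖deriv u 0‖ ^ 2 + 2 * |B₂| * ‖deriv v 0‖ ^ 2
        + B₁ * ‖deriv (deriv u) 0‖ + B₁ * ‖deriv (deriv v) 0‖ := by
    have k := congrArg norm Key
    rw [norm_mul, norm_pow, h12lam] at k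
    rw [k]
    exact tineq
  obtain ⟨hu1, hu2b⟩ := schwarz_coeffs hud hu0 humap
  obtain ⟨hv1, hv2b⟩ := schwarz_coeffs hvd hv0 hvmap
  rw [habsuv] at main hv2b
  have hfin : (1 + 2 * lam) * ‖deriv (deriv f) 0‖ ^ 2
      ≤ 4 * (B₁ + |B₁ - B₂|) := by
    have habs2 : |B₂| - B₁ ≤ |B₁ - B₂| := by
      have h := abs_sub_abs_le_abs_sub B₂ B₁
      rw [abs_sub_comm] at h
      calc |B₂| - B₁ = |B₂| - |B₁| := by rw [_root_.abs_of_pos hB₁]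
        _ ≤ |B₁ - B₂| := h
    have ht0 : 0 ≤ ‖deriv u 0‖ := norm_nonneg _
    have hB1u : B₁ * ‖deriv (deriv u) 0‖
        ≤ 2 * B₁ * (1 - ‖deriv u 0‖ ^ 2) := by nlinarith [hu2b, hB₁]
    have hB1v : B₁ * ‖deriv (deriv v) 0‖
        ≤ 2 * B₁ * (1 - ‖deriv u 0‖ ^ 2) := by nlinarith [hv2b, hB₁]
    have hstep : (|B₂| - B₁) * ‖deriv u 0‖ ^ 2 ≤ |B₁ - B₂| := by
      calc (|B₂| - B₁) * ‖deriv u 0‖ ^ 2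
          ≤ |B₁ - B₂| * ‖deriv u 0‖ ^ 2 :=
            mul_le_mul_of_nonneg_right habs2 (sq_nonneg _)
        _ ≤ |B₁ - B₂| * 1 := by
            apply mul_le_mul_of_nonneg_left _ (abs_nonneg _)
            nlinarith [hu1, ht0]
        _ = |B₁ - B₂| := mul_one _
    nlinarith [main, hB1u, hB1v, hstep, abs_nonneg B₂, sq_nonneg (‖deriv u 0‖)]
  have hi2 : iteratedDeriv 2 f 0 = deriv (deriv f) 0 := by
    rw [iteratedDeriv_succ, iteratedDeriv_one]
  rw [hi2, norm_div, Complex.norm_two]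
  have hpos : (0 : ℝ) < 1 + 2 * lam := by linarith
  have hq : (‖deriv (deriv f) 0‖ / 2) ^ 2 ≤ (B₁ + |B₁ - B₂|) / (1 + 2 * lam) := by
    have h4 : (‖deriv (deriv f) 0‖ / 2) ^ 2
        = ‖deriv (deriv f) 0‖ ^ 2 / 4 := by ring
    rw [h4, div_le_div_iff₀ (by norm_num) hpos]
    nlinarith [hfin]
  calc ‖deriv (deriv f) 0‖ / 2
      = Real.sqrt ((‖deriv (deriv f) 0‖ / 2) ^ 2) :=
        (Real.sqrt_sq (by positivity)).symm
    _ ≤ Real.sqrt ((B₁ + |B₁ - B₂|) / (1 + 2 * lam)) := Real.sqrt_le_sqrt hq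
end
end

section
/- Let 0 ≤ β < 1 and let f be bi-univalent with inverse extension F, such that f'(z) ≺ (1+(1−2β)z)/(1−z) and F'(w) ≺ (1+(1−2β)w)/(1−w) (equivalently, Re f'(z) > β and Re F'(w) > β on 𝔻). Then the second Taylor coefficient of f satisfies |a₂| ≤ √(2(1−β)/3). -/
open Metric Set Complex

noncomputable section

/-- Second derivative at 0 in terms of power series coefficient. -/
lemma aux_second {u : ℂ → ℂ} {p : FormalMultilinearSeries ℂ ℂ ℂ}
    (h : HasFPowerSeriesAt u p 0) : deriv (deriv u) 0 = 2 * p.coeff 2 := by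
  obtain ⟨r, hr⟩ := h
  have h2 := hr.factorial_smul (1 : ℂ) 2
  rw [← iteratedDeriv_eq_iteratedFDeriv] at h2
  have h3 : iteratedDeriv 2 u 0 = deriv (deriv u) 0 := by
    rw [show (2 : ℕ) = 1 + 1 from rfl, iteratedDeriv_succ, iteratedDeriv_one]
  rw [h3] at h2
  have : (Nat.factorial 2 : ℕ) • p 2 (fun _ => (1 : ℂ)) = 2 * p.coeff 2 := by
    rw [show Nat.factorial 2 = 2 from rfl, nsmul_eq_mul,
      show (p 2 fun _ => (1:ℂ)) = p.coeff 2 from rfl]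
    norm_num
  rw [this] at h2
  exact h2.symm

/-- Second derivative vs derivative of dslope. -/
lemma aux_dslope {ω : ℂ → ℂ} (h : AnalyticAt ℂ ω 0) :
    deriv (deriv ω) 0 = 2 * deriv (dslope ω 0) 0 := by
  obtain ⟨p, hp⟩ := h
  rw [aux_second hp, hp.has_fpower_series_dslope_fslope.deriv]
  rw [show (p.fslope 1 fun _ => (1:ℂ)) = p.fslope.coeff 1 from rfl,
    FormalMultilinearSeries.coeff_fslope]

lemma aux_mobius_ineq (u a : ℂ) (hu : ‖u‖ ≤ 1) (ha : ‖a‖ ≤ 1) :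
    ‖u - a‖ ≤ ‖1 - (starRingEnd ℂ) a * u‖ := by
  rw [Complex.norm_def, Complex.norm_def]
  apply Real.sqrt_le_sqrt
  have key : normSq (1 - (starRingEnd ℂ) a * u) - normSq (u - a)
      = (1 - normSq a) * (1 - normSq u) := by
    simp only [Complex.normSq_apply, Complex.sub_re, Complex.sub_im, Complex.mul_re,
      Complex.mul_im, Complex.conj_re, Complex.conj_im, Complex.one_re, Complex.one_im]
    ring
  have h1 : normSq u ≤ 1 := by
    rw [← Complex.sq_norm]; nlinarith [norm_nonneg u]
  have h2 : normSq a ≤ 1 := by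
    rw [← Complex.sq_norm]; nlinarith [norm_nonneg a]
  nlinarith

/-- Cauchy-type estimate: a map of the disc to the closed disc fixing 0 has |η'(0)| ≤ 1. -/
lemma aux_deriv_le_one {η : ℂ → ℂ} (hd : DifferentiableOn ℂ η (ball 0 1)) (h0 : η 0 = 0)
    (hb : ∀ z ∈ ball (0:ℂ) 1, ‖η z‖ ≤ 1) : ‖deriv η 0‖ ≤ 1 := by
  have key : ∀ ε : ℝ, 0 < ε → ‖deriv η 0‖ ≤ 1 + ε := by
    intro ε hε
    have hmaps : MapsTo η (ball (0:ℂ) 1) (ball (η 0) (1 + ε)) := by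
      intro z hz
      rw [h0, mem_ball_zero_iff]
      exact lt_of_le_of_lt (hb z hz) (by linarith)
    have := Complex.norm_deriv_le_div_of_mapsTo_ball hd (hmaps.mono_right ball_subset_closedBall) one_pos
    simpa using this
  by_contra hlt
  push_neg at hlt
  have := key ((‖deriv η 0‖ - 1)/2) (by linarith)
  linarith

/-- Schwarz–Pick second coefficient bound. -/
lemma aux_schwarz_pick {ω : ℂ → ℂ} (hd : DifferentiableOn ℂ ω (ball 0 1)) (h0 : ω 0 = 0)
    (hm : MapsTo ω (ball (0:ℂ) 1) (ball (0:ℂ) 1)) :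
    ‖deriv (deriv ω) 0‖ ≤ 2 * (1 - (‖deriv ω 0‖)^2) := by
  have h0ball : (0:ℂ) ∈ ball (0:ℂ) 1 := mem_ball_self one_pos
  set ψ := dslope ω 0 with hψdef
  have hψd : DifferentiableOn ℂ ψ (ball 0 1) :=
    (differentiableOn_dslope (isOpen_ball.mem_nhds h0ball)).mpr hd
  have hm' : MapsTo ω (ball (0:ℂ) 1) (ball (ω 0) 1) := by rwa [h0]
  have hψ1 : ∀ z ∈ ball (0:ℂ) 1, ‖ψ z‖ ≤ 1 := by
    intro z hz
    have := Complex.norm_dslope_le_div_of_mapsTo_ball hd (hm'.mono_right ball_subset_closedBall) hz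
    simpa using this
  have hψ0 : ψ 0 = deriv ω 0 := dslope_same ω 0
  set a := deriv ω 0 with hadef
  have ha : ‖a‖ ≤ 1 := by rw [← hψ0]; exact hψ1 0 h0ball
  have hωa : AnalyticAt ℂ ω 0 := (hd.analyticOnNhd isOpen_ball) 0 h0ball
  have hdd : deriv (deriv ω) 0 = 2 * deriv ψ 0 := aux_dslope hωa
  rw [hdd]
  have habs : ‖2 * deriv ψ 0‖ = 2 * ‖deriv ψ 0‖ := by
    rw [norm_mul]; norm_num
  rw [habs]
  have main : ‖deriv ψ 0‖ ≤ 1 - (‖a‖)^2 := by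
    rcases lt_or_eq_of_le ha with hlt | heq
    · -- |a| < 1 : Möbius transformation argument
      set η : ℂ → ℂ := fun z => (ψ z - a) / (1 - (starRingEnd ℂ) a * ψ z) with hηdef
      have hden : ∀ z ∈ ball (0:ℂ) 1, 1 - (starRingEnd ℂ) a * ψ z ≠ 0 := by
        intro z hz h
        have h1 : ‖(starRingEnd ℂ) a * ψ z‖ = 1 := by
          have : (starRingEnd ℂ) a * ψ z = 1 := by linear_combination -h
          rw [this]; simp
        rw [norm_mul, Complex.norm_conj] at h1
        nlinarith [hψ1 z hz, norm_nonneg a, norm_nonneg (ψ z)]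
      have hηd : DifferentiableOn ℂ η (ball 0 1) := by
        apply DifferentiableOn.div
        · exact hψd.sub (differentiableOn_const a)
        · exact (differentiableOn_const _).sub ((differentiableOn_const _).mul hψd)
        · exact hden
      have hη0 : η 0 = 0 := by simp [hηdef, hψ0]
      have hη1 : ∀ z ∈ ball (0:ℂ) 1, ‖η z‖ ≤ 1 := by
        intro z hz
        rw [hηdef]
        simp only [norm_div]
        rw [div_le_one (by
          have := hden z hz
          rcases eq_or_lt_of_le (norm_nonneg (1 - (starRingEnd ℂ) a * ψ z)) with h | h
          · exact absurd (norm_eq_zero.mp h.symm) this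
          · exact h)]
        simpa using aux_mobius_ineq (ψ z) a (hψ1 z hz) ha
      have hη'le : ‖deriv η 0‖ ≤ 1 := aux_deriv_le_one hηd hη0 hη1
      -- compute deriv η 0
      have hψat : DifferentiableAt ℂ ψ 0 :=
        hψd.differentiableAt (isOpen_ball.mem_nhds h0ball)
      have hd0 : (1 : ℂ) - (starRingEnd ℂ) a * ψ 0 = ((1 - normSq a : ℝ) : ℂ) := by
        rw [hψ0, mul_comm ((starRingEnd ℂ) a) a, Complex.mul_conj]
        push_cast
        ring
      have hne : (1 : ℂ) - (starRingEnd ℂ) a * ψ 0 ≠ 0 := hden 0 h0ball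
      have hderiv : deriv η 0 = deriv ψ 0 / (1 - (starRingEnd ℂ) a * ψ 0) := by
        rw [hηdef]
        rw [deriv_fun_div (hψat.fun_sub (differentiableAt_const a))
          ((differentiableAt_const _).fun_sub ((differentiableAt_const _).fun_mul hψat)) hne]
        rw [deriv_fun_sub hψat (differentiableAt_const a), deriv_const,
          deriv_fun_sub (differentiableAt_const _) ((differentiableAt_const _).fun_mul hψat),
          deriv_const, deriv_const_mul _ hψat]
        have hne' : (1:ℂ) - (starRingEnd ℂ) a * a ≠ 0 := by
          rw [hψ0] at hne; exact hne
        rw [hψ0]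
        field_simp
        ring
      have hval : ‖1 - (starRingEnd ℂ) a * ψ 0‖ = 1 - (‖a‖)^2 := by
        rw [hd0, Complex.norm_real, Real.norm_eq_abs, ← Complex.sq_norm]
        exact _root_.abs_of_nonneg (by nlinarith [norm_nonneg a])
      have := hη'le
      rw [hderiv, norm_div, hval, div_le_one (by nlinarith [norm_nonneg a])] at this
      linarith
    · -- |a| = 1 : ψ is constant by maximum principle
      have hmax : IsMaxOn (norm ∘ ψ) (ball (0:ℂ) 1) 0 := by
        intro z hz
        simp only [Function.comp_apply, hψ0, mem_setOf_eq, heq]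
        exact hψ1 z hz
      have heqon : EqOn ψ (Function.const ℂ (ψ 0)) (ball (0:ℂ) 1) :=
        Complex.eqOn_of_isPreconnected_of_isMaxOn_norm (convex_ball 0 1).isPreconnected
          isOpen_ball hψd h0ball hmax
      have hev : ψ =ᶠ[nhds 0] Function.const ℂ (ψ 0) :=
        Filter.eventually_of_mem (isOpen_ball.mem_nhds h0ball) heqon
      have : deriv ψ 0 = 0 := by
        rw [hev.deriv_eq]
        exact deriv_const 0 (ψ 0)
      rw [this]
      simp [heq]
  nlinarith [norm_nonneg (deriv ψ 0)]

/-- Carathéodory-type bound: if g maps the disc into Re > β and g(0) = 1 then |g''(0)| ≤ 4(1-β). -/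
lemma aux_cara {β : ℝ} (hβ1 : β < 1) {g : ℂ → ℂ}
    (hd : DifferentiableOn ℂ g (ball 0 1)) (h0 : g 0 = 1)
    (hre : ∀ z ∈ ball (0:ℂ) 1, β < (g z).re) :
    ‖deriv (deriv g) 0‖ ≤ 4 * (1 - β) := by
  have h0ball : (0:ℂ) ∈ ball (0:ℂ) 1 := mem_ball_self one_pos
  set cB : ℂ := ((2*β - 1 : ℝ) : ℂ) with hcB
  have hkey : ∀ z ∈ ball (0:ℂ) 1,
      normSq (g z - cB) - normSq (g z - 1) = (2 - 2*β) * (2*(g z).re - 2*β) := by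
    intro z hz
    simp only [hcB, Complex.normSq_apply, Complex.sub_re, Complex.sub_im, Complex.ofReal_re,
      Complex.ofReal_im, Complex.one_re, Complex.one_im]
    ring
  have hden : ∀ z ∈ ball (0:ℂ) 1, g z - cB ≠ 0 := by
    intro z hz h
    have h1 := hkey z hz
    rw [h, map_zero] at h1
    nlinarith [hre z hz, Complex.normSq_nonneg (g z - 1)]
  set ω : ℂ → ℂ := fun z => (g z - 1) / (g z - cB) with hωdef
  have hωd : DifferentiableOn ℂ ω (ball 0 1) := by
    apply DifferentiableOn.div
    · exact hd.sub (differentiableOn_const 1)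
    · exact hd.sub (differentiableOn_const cB)
    · exact hden
  have hω0 : ω 0 = 0 := by simp [hωdef, h0]
  have hωm : MapsTo ω (ball (0:ℂ) 1) (ball (0:ℂ) 1) := by
    intro z hz
    rw [mem_ball_zero_iff, hωdef]
    simp only [norm_div]
    have hpos : 0 < ‖g z - cB‖ := by
      rcases eq_or_lt_of_le (norm_nonneg (g z - cB)) with h | h
      · exact absurd (norm_eq_zero.mp h.symm) (hden z hz)
      · exact h
    rw [div_lt_one hpos]
    rw [Complex.norm_def, Complex.norm_def]
    apply Real.sqrt_lt_sqrt (Complex.normSq_nonneg _)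
    have := hkey z hz
    nlinarith [hre z hz]
  -- analyticity
  have hga : AnalyticOnNhd ℂ g (ball 0 1) := hd.analyticOnNhd isOpen_ball
  have hg'a : AnalyticOnNhd ℂ (deriv g) (ball 0 1) := hga.deriv
  have hωa : AnalyticOnNhd ℂ ω (ball 0 1) := hωd.analyticOnNhd isOpen_ball
  have hω'a : AnalyticOnNhd ℂ (deriv ω) (ball 0 1) := hωa.deriv
  have hball_ev : ∀ᶠ z in nhds (0:ℂ), z ∈ ball (0:ℂ) 1 :=
    Filter.eventually_of_mem (isOpen_ball.mem_nhds h0ball) (fun _ h => h)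
  -- identity on the ball
  have hIdOn : ∀ z ∈ ball (0:ℂ) 1, g z * (1 - ω z) = 1 - cB * ω z := by
    intro z hz
    have h1 : g z - cB ≠ 0 := hden z hz
    rw [hωdef]
    field_simp
    ring
  have hIdEv : (fun z => g z * (1 - ω z)) =ᶠ[nhds (0:ℂ)] (fun z => 1 - cB * ω z) :=
    Filter.eventually_of_mem (isOpen_ball.mem_nhds h0ball) hIdOn
  -- first derivative identity, eventually
  have hD1Ev : (fun z => deriv g z * (1 - ω z) - g z * deriv ω z)
      =ᶠ[nhds (0:ℂ)] (fun z => -(cB * deriv ω z)) := by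
    have h := hIdEv.deriv
    filter_upwards [h, hball_ev] with z h1 hz
    have hgz : DifferentiableAt ℂ g z := (hga z hz).differentiableAt
    have hωz : DifferentiableAt ℂ ω z := (hωa z hz).differentiableAt
    have e1 : deriv (fun w => g w * (1 - ω w)) z
        = deriv g z * (1 - ω z) + g z * (-(deriv ω z)) := by
      rw [deriv_fun_mul hgz ((differentiableAt_const _).fun_sub hωz),
        deriv_fun_sub (differentiableAt_const _) hωz, deriv_const]
      ring_nf
    have e2 : deriv (fun w => 1 - cB * ω w) z = -(cB * deriv ω z) := by
      rw [deriv_fun_sub (differentiableAt_const _) ((differentiableAt_const _).fun_mul hωz),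
        deriv_const, deriv_const_mul _ hωz]
      ring
    rw [e1, e2] at h1
    linear_combination h1
  -- values at 0
  have hrel1 : deriv g 0 = (1 - cB) * deriv ω 0 := by
    have := hD1Ev.self_of_nhds
    simp only [hω0, h0, mul_zero, sub_zero, mul_one, one_mul] at this
    linear_combination this
  -- second derivative identity at 0
  have hdg0 : DifferentiableAt ℂ (deriv g) 0 := (hg'a 0 h0ball).differentiableAt
  have hdω0 : DifferentiableAt ℂ (deriv ω) 0 := (hω'a 0 h0ball).differentiableAt
  have hg0 : DifferentiableAt ℂ g 0 := (hga 0 h0ball).differentiableAt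
  have hω0' : DifferentiableAt ℂ ω 0 := (hωa 0 h0ball).differentiableAt
  have hrel2 : deriv (deriv g) 0
      = 2 * deriv g 0 * deriv ω 0 + (1 - cB) * deriv (deriv ω) 0 := by
    have h := hD1Ev.deriv_eq
    have eR : deriv (fun z => -(cB * deriv ω z)) 0 = -(cB * deriv (deriv ω) 0) := by
      rw [show (fun z => -(cB * deriv ω z)) = fun z => (-cB) * deriv ω z by
        funext z; ring]
      rw [deriv_const_mul _ hdω0]
      ring
    have eL : deriv (fun z => deriv g z * (1 - ω z) - g z * deriv ω z) 0
        = deriv (deriv g) 0 * (1 - ω 0) + deriv g 0 * (-(deriv ω 0))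
          - (deriv g 0 * deriv ω 0 + g 0 * deriv (deriv ω) 0) := by
      rw [deriv_fun_sub (hdg0.fun_mul ((differentiableAt_const _).fun_sub hω0'))
        (hg0.fun_mul hdω0)]
      rw [deriv_fun_mul hdg0 ((differentiableAt_const _).fun_sub hω0'),
        deriv_fun_sub (differentiableAt_const _) hω0', deriv_const,
        deriv_fun_mul hg0 hdω0]
      ring
    rw [eL, eR] at h
    simp only [hω0, h0, sub_zero, mul_one, one_mul] at h
    linear_combination h
  -- Schwarz-Pick bound on ω
  have hSP : ‖deriv (deriv ω) 0‖ ≤ 2 * (1 - (‖deriv ω 0‖)^2) :=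
    aux_schwarz_pick hωd hω0 hωm
  -- |1 - cB| = 2(1-β)
  have h1cB : ‖1 - cB‖ = 2*(1 - β) := by
    rw [hcB, show (1 : ℂ) - ((2*β - 1 : ℝ) : ℂ) = ((2 - 2*β : ℝ) : ℂ) by push_cast; ring,
      Complex.norm_real, Real.norm_eq_abs, abs_of_pos (by linarith)]
    ring
  set w₁ := ‖deriv ω 0‖ with hw₁
  have hdgabs : ‖deriv g 0‖ = 2*(1-β) * w₁ := by
    rw [hrel1, norm_mul, h1cB]
  calc ‖deriv (deriv g) 0‖
      ≤ ‖2 * deriv g 0 * deriv ω 0‖ + ‖(1 - cB) * deriv (deriv ω) 0‖ := by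
        rw [hrel2]; exact norm_add_le _ _
    _ = 2 * (2*(1-β) * w₁) * w₁ + 2*(1-β) * ‖deriv (deriv ω) 0‖ := by
        rw [norm_mul, norm_mul, norm_mul, h1cB, hdgabs, Complex.norm_two, ← hw₁]
        try ring
    _ ≤ 2 * (2*(1-β) * w₁) * w₁ + 2*(1-β) * (2 * (1 - w₁^2)) := by
        have h2 : (0:ℝ) ≤ 2*(1-β) := by linarith
        nlinarith
    _ = 4 * (1 - β) := by ring

theorem stmt1 (β : ℝ) (hβ0 : 0 ≤ β) (hβ1 : β < 1)
    (f F : ℂ → ℂ)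
    (hf : DifferentiableOn ℂ f (ball 0 1)) (hf0 : f 0 = 0) (hf1 : deriv f 0 = 1)
    (hfi : InjOn f (ball 0 1))
    (hF : DifferentiableOn ℂ F (ball 0 1)) (hF0 : F 0 = 0) (hFi : InjOn F (ball 0 1))
    (hFf : ∀ᶠ z in nhds (0 : ℂ), F (f z) = z)
    (hfre : ∀ z ∈ ball (0 : ℂ) 1, β < (deriv f z).re)
    (hFre : ∀ w ∈ ball (0 : ℂ) 1, β < (deriv F w).re) :
    ‖iteratedDeriv 2 f 0 / 2‖ ≤ Real.sqrt (2 * (1 - β) / 3) := by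
  have h0ball : (0:ℂ) ∈ ball (0:ℂ) 1 := mem_ball_self one_pos
  have hfa : AnalyticOnNhd ℂ f (ball 0 1) := hf.analyticOnNhd isOpen_ball
  have hFa : AnalyticOnNhd ℂ F (ball 0 1) := hF.analyticOnNhd isOpen_ball
  have hga : AnalyticOnNhd ℂ (deriv f) (ball 0 1) := hfa.deriv
  have hGa : AnalyticOnNhd ℂ (deriv F) (ball 0 1) := hFa.deriv
  have hg'a : AnalyticOnNhd ℂ (deriv (deriv f)) (ball 0 1) := hga.deriv
  have hG'a : AnalyticOnNhd ℂ (deriv (deriv F)) (ball 0 1) := hGa.deriv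
  have hball_ev : ∀ᶠ z in nhds (0:ℂ), z ∈ ball (0:ℂ) 1 :=
    Filter.eventually_of_mem (isOpen_ball.mem_nhds h0ball) (fun _ h => h)
  have hnear : ∀ᶠ z in nhds (0:ℂ), f z ∈ ball (0:ℂ) 1 := by
    have hc : ContinuousAt f 0 := (hfa 0 h0ball).continuousAt
    apply hc.eventually_mem
    rw [hf0]
    exact isOpen_ball.mem_nhds h0ball
  -- h₁ : eventually, F'(f z) * f'(z) = 1
  have hFfEq : (fun z => F (f z)) =ᶠ[nhds (0:ℂ)] (fun z => z) := hFf
  have h₁ : ∀ᶠ z in nhds (0:ℂ), deriv F (f z) * deriv f z = 1 := by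
    have hd2 := hFfEq.deriv
    filter_upwards [hd2, hnear, hball_ev] with z h1 h2 h3
    have hcomp : deriv (F ∘ f) z = deriv F (f z) * deriv f z :=
      deriv_comp z ((hFa _ h2).differentiableAt) ((hfa _ h3).differentiableAt)
    have h1' : deriv (fun w => F (f w)) z = deriv (fun w : ℂ => w) z := h1
    exact hcomp.symm.trans (h1'.trans (by rw [deriv_id'']))
  have hG0 : deriv F 0 = 1 := by
    have := h₁.self_of_nhds
    rwa [hf0, hf1, mul_one] at this
  -- differentiability at points
  have hdFA : ∀ z ∈ ball (0:ℂ) 1, DifferentiableAt ℂ f z := fun z hz => (hfa z hz).differentiableAt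
  have hGat : ∀ z ∈ ball (0:ℂ) 1, DifferentiableAt ℂ (deriv F) z :=
    fun z hz => (hGa z hz).differentiableAt
  have hgat : ∀ z ∈ ball (0:ℂ) 1, DifferentiableAt ℂ (deriv f) z :=
    fun z hz => (hga z hz).differentiableAt
  -- composite differentiabilities at 0
  have hf'0 : DifferentiableAt ℂ f 0 := hdFA 0 h0ball
  have hGf0 : DifferentiableAt ℂ (deriv F) (f 0) := by
    rw [hf0]; exact hGat 0 h0ball
  have hG'f0 : DifferentiableAt ℂ (deriv (deriv F)) (f 0) := by
    rw [hf0]; exact (hG'a 0 h0ball).differentiableAt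
  have hGcomp0 : DifferentiableAt ℂ (fun z => deriv F (f z)) 0 := by
    have := DifferentiableAt.comp 0 hGf0 hf'0
    exact this
  have hG'comp0 : DifferentiableAt ℂ (fun z => deriv (deriv F) (f z)) 0 := by
    have := DifferentiableAt.comp 0 hG'f0 hf'0
    exact this
  have hg0 : DifferentiableAt ℂ (deriv f) 0 := hgat 0 h0ball
  have hg'0 : DifferentiableAt ℂ (deriv (deriv f)) 0 := (hg'a 0 h0ball).differentiableAt
  -- relation a' = -a
  have hcompderiv : deriv (fun z => deriv F (f z)) 0 = deriv (deriv F) 0 := by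
    have h : deriv (fun z => deriv F (f z)) 0 = deriv (deriv F) (f 0) * deriv f 0 :=
      deriv_comp 0 hGf0 hf'0
    rw [h, hf0, hf1, mul_one]
  have h₁' : (fun z => deriv F (f z) * deriv f z) =ᶠ[nhds (0:ℂ)] (fun _ => (1:ℂ)) := h₁
  have hrel2 : deriv (deriv F) 0 + deriv (deriv f) 0 = 0 := by
    have h := h₁'.deriv_eq
    have hL : deriv (fun z => deriv F (f z) * deriv f z) 0
        = deriv (fun z => deriv F (f z)) 0 * deriv f 0 + deriv F (f 0) * deriv (deriv f) 0 :=
      deriv_fun_mul hGcomp0 hg0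
    rw [hL, hcompderiv, hf0, hf1, hG0, mul_one, one_mul, deriv_const] at h
    exact h
  -- second relation : eventual product rule
  have hE : (fun z => deriv (deriv F) (f z) * deriv f z * deriv f z + deriv F (f z) * deriv (deriv f) z)
      =ᶠ[nhds (0:ℂ)] (fun _ => (0:ℂ)) := by
    have hder := h₁'.deriv
    filter_upwards [hder, hnear, hball_ev] with z h1 h2 h3
    have hfz : DifferentiableAt ℂ f z := hdFA z h3
    have hGz : DifferentiableAt ℂ (deriv F) (f z) := hGat _ h2
    have hG'z : DifferentiableAt ℂ (deriv (deriv F)) (f z) := (hG'a _ h2).differentiableAt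
    have hgz : DifferentiableAt ℂ (deriv f) z := hgat z h3
    have hGfz : DifferentiableAt ℂ (fun w => deriv F (f w)) z := by
      have := DifferentiableAt.comp z hGz hfz
      exact this
    have hcompz : deriv (fun w => deriv F (f w)) z = deriv (deriv F) (f z) * deriv f z := by
      have h := deriv_comp z hGz hfz
      exact h
    have hL : deriv (fun w => deriv F (f w) * deriv f w) z
        = deriv (deriv F) (f z) * deriv f z * deriv f z + deriv F (f z) * deriv (deriv f) z := by
      rw [deriv_fun_mul hGfz hgz, hcompz]
    rw [← hL, h1, deriv_const]
  have hrel3 : deriv (deriv (deriv F)) 0 + 3 * deriv (deriv F) 0 * deriv (deriv f) 0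
      + deriv (deriv (deriv f)) 0 = 0 := by
    have h := hE.deriv_eq
    rw [deriv_const] at h
    have hG'comp0' : deriv (fun z => deriv (deriv F) (f z)) 0 = deriv (deriv (deriv F)) 0 := by
      have hh : deriv (fun z => deriv (deriv F) (f z)) 0
          = deriv (deriv (deriv F)) (f 0) * deriv f 0 := deriv_comp 0 hG'f0 hf'0
      rw [hh, hf0, hf1, mul_one]
    have e1 : deriv (fun z => deriv (deriv F) (f z) * deriv f z * deriv f z
        + deriv F (f z) * deriv (deriv f) z) 0
        = (deriv (fun z => deriv (deriv F) (f z)) 0 * deriv f 0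
            + deriv (deriv F) (f 0) * deriv (deriv f) 0) * deriv f 0
          + deriv (deriv F) (f 0) * deriv f 0 * deriv (deriv f) 0
          + (deriv (fun z => deriv F (f z)) 0 * deriv (deriv f) 0
            + deriv F (f 0) * deriv (deriv (deriv f)) 0) := by
      rw [deriv_fun_add ((hG'comp0.fun_mul hg0).fun_mul hg0) (hGcomp0.fun_mul hg'0)]
      rw [deriv_fun_mul (hG'comp0.fun_mul hg0) hg0, deriv_fun_mul hG'comp0 hg0,
        deriv_fun_mul hGcomp0 hg'0]
      try ring
    rw [e1, hG'comp0', hcompderiv, hf0, hf1, hG0] at h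
    linear_combination h
  -- from hrel2 : F''(0) = -f''(0), so hrel3 gives F'''(0) + f'''(0) = 3 f''(0)^2
  have hkey : deriv (deriv (deriv F)) 0 + deriv (deriv (deriv f)) 0
      = 3 * (deriv (deriv f) 0)^2 := by
    linear_combination hrel3 - 3 * deriv (deriv f) 0 * hrel2
  -- Carathéodory bounds
  have hb : ‖deriv (deriv (deriv f)) 0‖ ≤ 4 * (1 - β) := by
    have := aux_cara hβ1 (hga.differentiableOn) hf1 hfre
    exact this
  have hb' : ‖deriv (deriv (deriv F)) 0‖ ≤ 4 * (1 - β) := by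
    have := aux_cara hβ1 (hGa.differentiableOn) hG0 hFre
    exact this
  -- conclude
  have hsum : ‖3 * (deriv (deriv f) 0)^2‖ ≤ 8 * (1 - β) := by
    rw [← hkey]
    calc ‖deriv (deriv (deriv F)) 0 + deriv (deriv (deriv f)) 0‖
        ≤ ‖deriv (deriv (deriv F)) 0‖ + ‖deriv (deriv (deriv f)) 0‖ :=
          norm_add_le _ _
      _ ≤ 8 * (1 - β) := by linarith
  have habs2 : ‖3 * (deriv (deriv f) 0)^2‖
      = 3 * (‖deriv (deriv f) 0‖)^2 := by
    rw [norm_mul, norm_pow]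
    norm_num
  rw [habs2] at hsum
  have hgoal2 : iteratedDeriv 2 f 0 = deriv (deriv f) 0 := by
    rw [show (2 : ℕ) = 1 + 1 from rfl, iteratedDeriv_succ, iteratedDeriv_one]
  rw [hgoal2]
  rw [Real.le_sqrt (norm_nonneg _) (by nlinarith)]
  rw [norm_div]
  have : ‖(2 : ℂ)‖ = 2 := Complex.norm_two
  rw [this]
  rw [div_pow]
  nlinarith [norm_nonneg (deriv (deriv f) 0)]
end
end

section
/- Let f be a bi-univalent function of the class S*_σ(φ), i.e. f is bi-univalent with inverse extension F and both zf'(z)/f(z) ≺ φ(z) and wF'(w)/F(w) ≺ φ(w). Then the second Taylor coefficient of f satisfies |a₂| ≤ √(B₁ + |B₂ − B₁|). -/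
open Metric Set Complex

noncomputable section

section
variable {u v : ℂ → ℂ}

private lemma aderiv {u : ℂ → ℂ} {x : ℂ} (h : AnalyticAt ℂ u x) : AnalyticAt ℂ (deriv u) x := by
  have h2 := h.eventually_analyticAt
  rw [Filter.eventually_iff, _root_.mem_nhds_iff] at h2
  obtain ⟨t, ht, hto, hxt⟩ := h2
  exact (AnalyticOnNhd.deriv (fun y hy => ht hy)) x hxt

private lemma edif {u : ℂ → ℂ} (h : AnalyticAt ℂ u 0) :
    ∀ᶠ z in nhds (0:ℂ), DifferentiableAt ℂ u z :=
  h.eventually_analyticAt.mono fun z hz => hz.differentiableAt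

private lemma evmul {u v : ℂ → ℂ} (hu : AnalyticAt ℂ u 0) (hv : AnalyticAt ℂ v 0) :
    deriv (fun z => u z * v z) =ᶠ[nhds (0:ℂ)] fun z => deriv u z * v z + u z * deriv v z := by
  filter_upwards [edif hu, edif hv] with z h1 h2
  exact deriv_mul h1 h2

private lemma evadd {u v : ℂ → ℂ} (hu : AnalyticAt ℂ u 0) (hv : AnalyticAt ℂ v 0) :
    deriv (fun z => u z + v z) =ᶠ[nhds (0:ℂ)] fun z => deriv u z + deriv v z := by
  filter_upwards [edif hu, edif hv] with z h1 h2
  exact deriv_add h1 h2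

private lemma evcomp {u v : ℂ → ℂ} (hv : AnalyticAt ℂ v 0) (hu : AnalyticAt ℂ u (v 0)) :
    deriv (fun z => u (v z)) =ᶠ[nhds (0:ℂ)] fun z => deriv u (v z) * deriv v z := by
  have hc : ContinuousAt v 0 := hv.continuousAt
  have h1 : ∀ᶠ z in nhds (0:ℂ), DifferentiableAt ℂ u (v z) :=
    hc.eventually (hu.eventually_analyticAt.mono fun w hw => hw.differentiableAt)
  filter_upwards [h1, edif hv] with z h1 h2
  exact deriv_comp z h1 h2

private lemma prodlem (hu : AnalyticAt ℂ u 0) (hv : AnalyticAt ℂ v 0)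
    (hid : (fun z => u z * v z) =ᶠ[nhds (0:ℂ)] fun z => z * deriv v z)
    (hv0 : v 0 = 0) (hv1 : deriv v 0 = 1) (hu0 : u 0 = 1) :
    deriv u 0 = deriv (deriv v) 0 / 2 ∧
    deriv (deriv u) 0 =
      (2/3) * deriv (deriv (deriv v)) 0 - deriv u 0 * deriv (deriv v) 0 := by
  have hv1a : AnalyticAt ℂ (deriv v) 0 := aderiv hv
  have hv2a : AnalyticAt ℂ (deriv (deriv v)) 0 := aderiv hv1a
  have hv3a : AnalyticAt ℂ (deriv (deriv (deriv v))) 0 := aderiv hv2a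
  have hu1a : AnalyticAt ℂ (deriv u) 0 := aderiv hu
  have hu2a : AnalyticAt ℂ (deriv (deriv u)) 0 := aderiv hu1a
  have hida : AnalyticAt ℂ (fun z : ℂ => z) 0 := analyticAt_id
  -- Level 1
  have HB1 : deriv (fun z : ℂ => z * deriv v z) =ᶠ[nhds (0:ℂ)]
      fun z => deriv v z + z * deriv (deriv v) z := by
    refine (evmul hida hv1a).trans (Filter.Eventually.of_forall fun z => ?_)
    simp
  have K1 : (fun z => deriv u z * v z + u z * deriv v z) =ᶠ[nhds (0:ℂ)]
      fun z => deriv v z + z * deriv (deriv v) z :=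
    (evmul hu hv).symm.trans (hid.deriv.trans HB1)
  -- Level 2
  have LL : deriv (fun z => deriv u z * v z + u z * deriv v z) =ᶠ[nhds (0:ℂ)]
      fun z => (deriv (deriv u) z * v z + deriv u z * deriv v z)
        + (deriv u z * deriv v z + u z * deriv (deriv v) z) := by
    filter_upwards [evadd (u := fun z => deriv u z * v z) (v := fun z => u z * deriv v z)
        (hu1a.mul hv) (hu.mul hv1a), evmul hu1a hv, evmul hu hv1a]
      with z h1 h2 h3
    rw [h1, h2, h3]
  have RR : deriv (fun z => deriv v z + z * deriv (deriv v) z) =ᶠ[nhds (0:ℂ)]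
      fun z => deriv (deriv v) z + (deriv (deriv v) z + z * deriv (deriv (deriv v)) z) := by
    filter_upwards [evadd (u := deriv v) (v := fun z => z * deriv (deriv v) z)
        hv1a (hida.mul hv2a), evmul hida hv2a] with z h1 h2
    rw [h1, h2]; simp
  have K2 : (fun z => (deriv (deriv u) z * v z + deriv u z * deriv v z)
        + (deriv u z * deriv v z + u z * deriv (deriv v) z)) =ᶠ[nhds (0:ℂ)]
      fun z => deriv (deriv v) z + (deriv (deriv v) z + z * deriv (deriv (deriv v)) z) :=
    LL.symm.trans (K1.deriv.trans RR)
  have e2 := K2.eq_of_nhds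
  simp only [hv0, hv1, hu0, mul_zero, mul_one, one_mul, zero_add, add_zero, zero_mul] at e2
  -- e2 : deriv u 0 + (deriv u 0 + deriv (deriv v) 0) = deriv (deriv v) 0 + deriv (deriv v) 0
  have c1 : deriv u 0 = deriv (deriv v) 0 / 2 := by linear_combination (e2) / 2
  -- Level 3
  have LLL : deriv (fun z => (deriv (deriv u) z * v z + deriv u z * deriv v z)
        + (deriv u z * deriv v z + u z * deriv (deriv v) z)) =ᶠ[nhds (0:ℂ)]
      fun z => ((deriv (deriv (deriv u)) z * v z + deriv (deriv u) z * deriv v z)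
          + (deriv (deriv u) z * deriv v z + deriv u z * deriv (deriv v) z))
        + ((deriv (deriv u) z * deriv v z + deriv u z * deriv (deriv v) z)
          + (deriv u z * deriv (deriv v) z + u z * deriv (deriv (deriv v)) z)) := by
    filter_upwards [evadd (u := fun z => deriv (deriv u) z * v z + deriv u z * deriv v z)
        (v := fun z => deriv u z * deriv v z + u z * deriv (deriv v) z)
        ((hu2a.mul hv).add (hu1a.mul hv1a)) ((hu1a.mul hv1a).add (hu.mul hv2a)),
      evadd (u := fun z => deriv (deriv u) z * v z) (v := fun z => deriv u z * deriv v z)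
        (hu2a.mul hv) (hu1a.mul hv1a),
      evadd (u := fun z => deriv u z * deriv v z) (v := fun z => u z * deriv (deriv v) z)
        (hu1a.mul hv1a) (hu.mul hv2a),
      evmul hu2a hv, evmul hu1a hv1a, evmul hu hv2a] with z h1 h2 h3 h4 h5 h6
    rw [h1, h2, h3, h4, h5, h6]
  have RRR : deriv (fun z => deriv (deriv v) z
        + (deriv (deriv v) z + z * deriv (deriv (deriv v)) z)) =ᶠ[nhds (0:ℂ)]
      fun z => deriv (deriv (deriv v)) z + (deriv (deriv (deriv v)) z
        + (deriv (deriv (deriv v)) z + z * deriv (deriv (deriv (deriv v))) z)) := by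
    filter_upwards [evadd (u := deriv (deriv v))
        (v := fun z => deriv (deriv v) z + z * deriv (deriv (deriv v)) z)
        hv2a (hv2a.add (hida.mul hv3a)),
      evadd (u := deriv (deriv v)) (v := fun z => z * deriv (deriv (deriv v)) z)
        hv2a (hida.mul hv3a),
      evmul hida hv3a] with z h1 h2 h3
    rw [h1, h2, h3]; simp
  have K3 := (LLL.symm.trans (K2.deriv.trans RRR)).eq_of_nhds
  simp only [hv0, hv1, hu0, mul_zero, mul_one, one_mul, zero_add, add_zero, zero_mul] at K3
  refine ⟨c1, ?_⟩
  linear_combination K3 / 3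
private lemma complem {φ ω : ℂ → ℂ} (hφ : AnalyticAt ℂ φ 0) (hω : AnalyticAt ℂ ω 0)
    (hω0 : ω 0 = 0) :
    deriv (fun z => φ (ω z)) 0 = deriv φ 0 * deriv ω 0 ∧
    deriv (deriv (fun z => φ (ω z))) 0 =
      deriv (deriv φ) 0 * (deriv ω 0)^2 + deriv φ 0 * deriv (deriv ω) 0 := by
  have hφ' : AnalyticAt ℂ φ (ω 0) := by rw [hω0]; exact hφ
  have hφ1' : AnalyticAt ℂ (deriv φ) (ω 0) := by rw [hω0]; exact aderiv hφ
  have C1 := evcomp hω hφ'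
  refine ⟨by rw [C1.eq_of_nhds, hω0], ?_⟩
  have C2 : deriv (deriv (fun z => φ (ω z))) 0
      = deriv (fun z => deriv φ (ω z) * deriv ω z) 0 := C1.deriv.eq_of_nhds
  rw [C2, deriv_fun_mul (c := fun z => deriv φ (ω z)) (d := deriv ω) ((hφ1'.comp hω).differentiableAt) ((aderiv hω).differentiableAt),
    show deriv (fun z => deriv φ (ω z)) 0 = deriv (deriv φ) (ω 0) * deriv ω 0 from
      (evcomp hω hφ1').eq_of_nhds, hω0]
  ring

private lemma invlem {f F : ℂ → ℂ} (hf : AnalyticAt ℂ f 0) (hF : AnalyticAt ℂ F 0)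
    (hf0 : f 0 = 0) (hf1 : deriv f 0 = 1)
    (hFf : ∀ᶠ z in nhds (0:ℂ), F (f z) = z) :
    deriv F 0 = 1 ∧ deriv (deriv F) 0 = - deriv (deriv f) 0 ∧
    deriv (deriv (deriv F)) 0 = 3 * (deriv (deriv f) 0)^2 - deriv (deriv (deriv f)) 0 := by
  have hF' : AnalyticAt ℂ F (f 0) := by rw [hf0]; exact hF
  have hF1' : AnalyticAt ℂ (deriv F) (f 0) := by rw [hf0]; exact aderiv hF
  have hF2' : AnalyticAt ℂ (deriv (deriv F)) (f 0) := by rw [hf0]; exact aderiv (aderiv hF)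
  have hF3' : AnalyticAt ℂ (deriv (deriv (deriv F))) (f 0) := by rw [hf0]; exact aderiv (aderiv (aderiv hF))
  have hf1a := aderiv hf
  have hf2a := aderiv hf1a
  have hf3a := aderiv hf2a
  have hE : (fun z => F (f z)) =ᶠ[nhds (0:ℂ)] fun z => z := hFf
  have M1 : (fun z => deriv F (f z) * deriv f z) =ᶠ[nhds (0:ℂ)] fun _ => (1:ℂ) := by
    refine (evcomp hf hF').symm.trans (hE.deriv.trans ?_)
    exact Filter.Eventually.of_forall fun z => by simp
  have m1 : deriv F 0 = 1 := by
    have h := M1.eq_of_nhds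
    rw [hf0, hf1] at h
    simpa using h
  have hc1 : AnalyticAt ℂ (fun z => deriv F (f z)) 0 := hF1'.comp hf
  have hc2 : AnalyticAt ℂ (fun z => deriv (deriv F) (f z)) 0 := hF2'.comp hf
  have P1 : deriv (fun z => deriv F (f z)) =ᶠ[nhds (0:ℂ)]
      fun z => deriv (deriv F) (f z) * deriv f z := evcomp hf hF1'
  have P2 : deriv (fun z => deriv (deriv F) (f z)) =ᶠ[nhds (0:ℂ)]
      fun z => deriv (deriv (deriv F)) (f z) * deriv f z := evcomp hf hF2'
  have M2 : (fun z => (deriv (deriv F) (f z) * deriv f z) * deriv f z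
      + deriv F (f z) * deriv (deriv f) z) =ᶠ[nhds (0:ℂ)] fun _ => (0:ℂ) := by
    have expand : deriv (fun z => deriv F (f z) * deriv f z) =ᶠ[nhds (0:ℂ)]
        fun z => (deriv (deriv F) (f z) * deriv f z) * deriv f z
          + deriv F (f z) * deriv (deriv f) z := by
      filter_upwards [evmul (u := fun z => deriv F (f z)) (v := deriv f) hc1 hf1a, P1]
        with z e1 e2
      rw [e1, e2]
    refine expand.symm.trans (M1.deriv.trans ?_)
    exact Filter.Eventually.of_forall fun z => by simp
  have m2 : deriv (deriv F) 0 = - deriv (deriv f) 0 := by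
    have h := M2.eq_of_nhds
    rw [hf0, hf1, m1] at h
    linear_combination h
  have hA : AnalyticAt ℂ (fun z => deriv (deriv F) (f z) * deriv f z) 0 := hc2.mul hf1a
  have expandA : deriv (fun z => (deriv (deriv F) (f z) * deriv f z) * deriv f z)
      =ᶠ[nhds (0:ℂ)]
      fun z => ((deriv (deriv (deriv F)) (f z) * deriv f z) * deriv f z
          + deriv (deriv F) (f z) * deriv (deriv f) z) * deriv f z
        + (deriv (deriv F) (f z) * deriv f z) * deriv (deriv f) z := by
    filter_upwards [evmul (u := fun z => deriv (deriv F) (f z) * deriv f z) (v := deriv f)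
        hA hf1a,
      evmul (u := fun z => deriv (deriv F) (f z)) (v := deriv f) hc2 hf1a, P2] with z e1 e2 e3
    rw [e1, e2, e3]
  have expandB : deriv (fun z => deriv F (f z) * deriv (deriv f) z) =ᶠ[nhds (0:ℂ)]
      fun z => (deriv (deriv F) (f z) * deriv f z) * deriv (deriv f) z
        + deriv F (f z) * deriv (deriv (deriv f)) z := by
    filter_upwards [evmul (u := fun z => deriv F (f z)) (v := deriv (deriv f)) hc1 hf2a, P1]
      with z e1 e2
    rw [e1, e2]
  have M3 : (fun z => (((deriv (deriv (deriv F)) (f z) * deriv f z) * deriv f z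
          + deriv (deriv F) (f z) * deriv (deriv f) z) * deriv f z
        + (deriv (deriv F) (f z) * deriv f z) * deriv (deriv f) z)
      + ((deriv (deriv F) (f z) * deriv f z) * deriv (deriv f) z
        + deriv F (f z) * deriv (deriv (deriv f)) z)) =ᶠ[nhds (0:ℂ)] fun _ => (0:ℂ) := by
    have expandAB : deriv (fun z => (deriv (deriv F) (f z) * deriv f z) * deriv f z
        + deriv F (f z) * deriv (deriv f) z) =ᶠ[nhds (0:ℂ)]
        fun z => (((deriv (deriv (deriv F)) (f z) * deriv f z) * deriv f z
            + deriv (deriv F) (f z) * deriv (deriv f) z) * deriv f z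
          + (deriv (deriv F) (f z) * deriv f z) * deriv (deriv f) z)
        + ((deriv (deriv F) (f z) * deriv f z) * deriv (deriv f) z
          + deriv F (f z) * deriv (deriv (deriv f)) z) := by
      filter_upwards [evadd (u := fun z => (deriv (deriv F) (f z) * deriv f z) * deriv f z)
          (v := fun z => deriv F (f z) * deriv (deriv f) z)
          (hA.mul hf1a) (hc1.mul hf2a), expandA, expandB] with z e1 e2 e3
      rw [e1, e2, e3]
    refine expandAB.symm.trans (M2.deriv.trans ?_)
    exact Filter.Eventually.of_forall fun z => by simp
  have m3 := M3.eq_of_nhds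
  rw [hf0, hf1, m1, m2] at m3
  refine ⟨m1, m2, ?_⟩
  linear_combination m3
private lemma normsq_key (a w : ℂ) :
    Complex.normSq (1 - (starRingEnd ℂ) a * w) - Complex.normSq (w - a)
      = (1 - Complex.normSq a) * (1 - Complex.normSq w) := by
  simp only [Complex.normSq_apply, Complex.sub_re, Complex.sub_im, Complex.mul_re,
    Complex.mul_im, Complex.conj_re, Complex.conj_im, Complex.one_re, Complex.one_im]
  ring

private lemma schwarz1 {ω : ℂ → ℂ} (hω : DifferentiableOn ℂ ω (ball 0 1)) (h0 : ω 0 = 0)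
    (hm : ∀ z ∈ ball (0:ℂ) 1, ω z ∈ ball (0:ℂ) 1) : ‖deriv ω 0‖ ≤ 1 :=
  Complex.norm_deriv_le_one_of_mapsTo_ball hω (fun z hz => by rw [h0]; exact ball_subset_closedBall (hm z hz)) one_pos

private lemma schwarz2 {ω : ℂ → ℂ} (hω : DifferentiableOn ℂ ω (ball 0 1)) (h0 : ω 0 = 0)
    (hm : ∀ z ∈ ball (0:ℂ) 1, ω z ∈ ball (0:ℂ) 1) :
    ‖deriv (deriv ω) 0 + 2 * (deriv ω 0)^2‖ ≤ 2 := by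
  set h : ℂ → ℂ := dslope ω 0 with hh
  have hmem : ball (0:ℂ) 1 ∈ nhds (0:ℂ) := ball_mem_nhds _ one_pos
  have hd : DifferentiableOn ℂ h (ball 0 1) := (differentiableOn_dslope hmem).mpr hω
  have hb : ∀ z ∈ ball (0:ℂ) 1, ‖h z‖ ≤ 1 := by
    intro z hz
    have := Complex.norm_dslope_le_div_of_mapsTo_ball hω
      (fun w hw => by rw [h0]; exact ball_subset_closedBall (hm w hw)) hz
    simpa using this
  have hzero : (0:ℂ) ∈ ball (0:ℂ) 1 := mem_ball_self one_pos
  have hAnal : AnalyticAt ℂ h 0 := (hd.analyticOnNhd isOpen_ball) 0 hzero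
  have hωh : ∀ z : ℂ, ω z = z * h z := by
    intro z
    have := sub_smul_dslope ω 0 z
    rw [h0] at this
    simpa [smul_eq_mul] using this.symm
  -- a = h 0 = deriv ω 0
  have hωev : ω =ᶠ[nhds (0:ℂ)] fun z => z * h z := Filter.Eventually.of_forall hωh
  have hda : deriv ω 0 = h 0 := by
    rw [hωev.deriv_eq, deriv_fun_mul differentiableAt_fun_id hAnal.differentiableAt]
    simp
  set a : ℂ := h 0 with ha
  set b : ℂ := deriv h 0 with hbdef
  have hd2 : deriv (deriv ω) 0 = 2 * b := by
    have e1 : deriv ω =ᶠ[nhds (0:ℂ)] fun z => h z + z * deriv h z := by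
      refine hωev.deriv.trans ?_
      refine (evmul (u := fun z : ℂ => z) (v := h) analyticAt_id hAnal).trans ?_
      exact Filter.Eventually.of_forall fun z => by simp
    rw [e1.deriv_eq, deriv_fun_add (g := fun z => z * deriv h z) hAnal.differentiableAt
      (differentiableAt_fun_id.mul (aderiv hAnal).differentiableAt :
        DifferentiableAt ℂ (fun z => z * deriv h z) 0),
      deriv_fun_mul differentiableAt_fun_id (aderiv hAnal).differentiableAt]
    simp [hbdef]
    ring
  have hA1 : ‖a‖ ≤ 1 := hb 0 hzero
  have key : ‖b‖ ≤ 1 - ‖a‖ ^ 2 := by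
    rcases eq_or_lt_of_le hA1 with heq | hlt
    · -- |a| = 1 : h is constant by maximum modulus
      have hmax : IsMaxOn (norm ∘ h) (ball (0:ℂ) 1) 0 := by
        intro z hz
        simp only [Function.comp_apply]
        exact (hb z hz).trans_eq heq.symm
      have hconst := Complex.eqOn_of_isPreconnected_of_isMaxOn_norm
        (convex_ball (0:ℂ) 1).isPreconnected isOpen_ball hd hzero hmax
      have : h =ᶠ[nhds (0:ℂ)] fun _ => h 0 :=
        Filter.eventually_of_mem hmem fun z hz => hconst hz
      have hb0 : b = 0 := by
        rw [hbdef, this.deriv_eq]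
        simp
      rw [hb0, heq]
      simp
    · -- |a| < 1
      set ψ : ℂ → ℂ := fun z => (h z - a) / (1 - (starRingEnd ℂ) a * h z) with hψ
      have hden : ∀ z ∈ ball (0:ℂ) 1, 1 - (starRingEnd ℂ) a * h z ≠ 0 := by
        intro z hz hc
        have h1 : ‖(starRingEnd ℂ) a * h z‖ < 1 := by
          rw [norm_mul, Complex.norm_conj]
          calc ‖a‖ * ‖h z‖ ≤ ‖a‖ * 1 :=
            mul_le_mul_of_nonneg_left (hb z hz) (norm_nonneg _)
          _ = ‖a‖ := mul_one _
          _ < 1 := hlt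
        rw [sub_eq_zero] at hc
        rw [← hc] at h1
        simp at h1
      have hψd : DifferentiableOn ℂ ψ (ball 0 1) := by
        apply DifferentiableOn.div
        · exact hd.sub (differentiableOn_const _)
        · exact (differentiableOn_const _).sub ((differentiableOn_const _).mul hd)
        · exact hden
      have hψ0 : ψ 0 = 0 := by simp [hψ, ← ha]
      have hψb : ∀ z ∈ ball (0:ℂ) 1, ‖ψ z‖ ≤ 1 := by
        intro z hz
        rw [hψ]
        simp only [norm_div]
        rw [div_le_one (norm_pos_iff.mpr (hden z hz))]
        -- |h z - a| ≤ |1 - conj a * h z|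
        have hnsq : Complex.normSq (h z - a) ≤ Complex.normSq (1 - (starRingEnd ℂ) a * h z) := by
          have hk := normsq_key a (h z)
          have h1 : Complex.normSq a < 1 := by
            rw [← Complex.sq_norm]; nlinarith [norm_nonneg a]
          have h2 : Complex.normSq (h z) ≤ 1 := by
            rw [← Complex.sq_norm]; nlinarith [norm_nonneg (h z), hb z hz]
          nlinarith
        rw [Complex.norm_def, Complex.norm_def]
        exact Real.sqrt_le_sqrt hnsq
      have hdenom0 : (1 : ℂ) - (starRingEnd ℂ) a * h 0 = ((1 - Complex.normSq a : ℝ) : ℂ) := by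
        rw [← ha, mul_comm, Complex.mul_conj]
        push_cast
        ring
      have hnum : DifferentiableAt ℂ (fun z => h z - a) 0 := hAnal.differentiableAt.sub_const _
      have hden' : DifferentiableAt ℂ (fun z => 1 - (starRingEnd ℂ) a * h z) 0 :=
        (differentiableAt_const _).sub ((differentiableAt_const _).mul hAnal.differentiableAt)
      have hne : (1:ℂ) - (starRingEnd ℂ) a * h 0 ≠ 0 := hden 0 hzero
      have hψderiv : deriv ψ 0 = b / ((1:ℂ) - (starRingEnd ℂ) a * h 0) := by
        rw [hψ, deriv_fun_div hnum hden' hne]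
        have e1 : deriv (fun z => h z - a) 0 = b := by
          rw [deriv_sub_const]
        have e2 : deriv (fun z => 1 - (starRingEnd ℂ) a * h z) 0
            = -((starRingEnd ℂ) a * deriv h 0) := by
          rw [deriv_const_sub, deriv_const_mul _ hAnal.differentiableAt]
        rw [e1, e2, ← hbdef, ← ha]
        have hne' : (1:ℂ) - (starRingEnd ℂ) a * a ≠ 0 := by rw [ha]; exact hne
        field_simp
        ring
      have hψd1 : ‖deriv ψ 0‖ ≤ 1 := by
        by_contra hcon
        push_neg at hcon
        set R := (1 + ‖deriv ψ 0‖) / 2 with hR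
        have hR1 : 1 < R := by rw [hR]; linarith
        have hmapsψ : MapsTo ψ (ball (0:ℂ) 1) (ball (ψ 0) R) := by
          intro z hz
          rw [hψ0, mem_ball_zero_iff]
          exact lt_of_le_of_lt (hψb z hz) hR1
        have hle := Complex.norm_deriv_le_div_of_mapsTo_ball hψd (hmapsψ.mono_right ball_subset_closedBall) one_pos
        rw [div_one] at hle
        rw [hR] at hle
        linarith
      have hnormsq : Complex.normSq a < 1 := by
        rw [← Complex.sq_norm]
        nlinarith [norm_nonneg a]
      have habs : ‖deriv ψ 0‖ = ‖b‖ / (1 - Complex.normSq a) := by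
        rw [hψderiv, norm_div, hdenom0, Complex.norm_real, Real.norm_eq_abs, abs_of_pos (by linarith)]
      rw [habs, div_le_one (by linarith)] at hψd1
      rw [← Complex.sq_norm] at hψd1
      exact hψd1
  calc ‖deriv (deriv ω) 0 + 2 * (deriv ω 0)^2‖
      = ‖2 * (b + a^2)‖ := by rw [hd2, hda]; ring_nf
    _ = 2 * ‖b + a^2‖ := by rw [norm_mul]; simp
    _ ≤ 2 * (‖b‖ + ‖a‖^2) := by
        have h1 := norm_add_le b (a^2)
        rw [norm_pow] at h1
        linarith
    _ ≤ 2 * 1 := by nlinarith [norm_nonneg a]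
    _ = 2 := by norm_num

theorem stmt2
    (f F : ℂ → ℂ)
    (hf : DifferentiableOn ℂ f (ball 0 1)) (hf0 : f 0 = 0) (hf1 : deriv f 0 = 1)
    (hfi : InjOn f (ball 0 1))
    (hF : DifferentiableOn ℂ F (ball 0 1)) (hF0 : F 0 = 0) (hFi : InjOn F (ball 0 1))
    (hFf : ∀ᶠ z in nhds (0 : ℂ), F (f z) = z)
    (φ : ℂ → ℂ) (B₁ B₂ : ℝ)
    (hφ : DifferentiableOn ℂ φ (ball 0 1)) (hφ0 : φ 0 = 1)
    (hB₁ : 0 < B₁) (hφ1 : deriv φ 0 = (B₁ : ℂ)) (hφ2 : iteratedDeriv 2 φ 0 = 2 * (B₂ : ℂ))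
    (g : ℂ → ℂ) (hg0 : g 0 = 1)
    (hgf : ∀ z ∈ ball (0 : ℂ) 1, z ≠ 0 → g z = z * deriv f z / f z)
    (hgsub : Subordinate g φ)
    (G : ℂ → ℂ) (hG0 : G 0 = 1)
    (hGF : ∀ w ∈ ball (0 : ℂ) 1, w ≠ 0 → G w = w * deriv F w / F w)
    (hGsub : Subordinate G φ) :
    ‖iteratedDeriv 2 f 0 / 2‖ ≤ Real.sqrt (B₁ + |B₂ - B₁|) := by
  have h01 : (0:ℂ) ∈ ball (0:ℂ) 1 := mem_ball_self one_pos
  have hfa : AnalyticAt ℂ f 0 := (hf.analyticOnNhd isOpen_ball) 0 h01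
  have hFa : AnalyticAt ℂ F 0 := (hF.analyticOnNhd isOpen_ball) 0 h01
  have hφa : AnalyticAt ℂ φ 0 := (hφ.analyticOnNhd isOpen_ball) 0 h01
  obtain ⟨ω, hωd, hω0, hωm, hωg⟩ := hgsub
  obtain ⟨δ, hδd, hδ0, hδm, hδG⟩ := hGsub
  have hωa : AnalyticAt ℂ ω 0 := (hωd.analyticOnNhd isOpen_ball) 0 h01
  have hδa : AnalyticAt ℂ δ 0 := (hδd.analyticOnNhd isOpen_ball) 0 h01
  obtain ⟨hF1, hF2, hF3⟩ := invlem hfa hFa hf0 hf1 hFf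
  have hmem : ball (0:ℂ) 1 ∈ nhds (0:ℂ) := ball_mem_nhds _ one_pos
  have hidf : (fun z => φ (ω z) * f z) =ᶠ[nhds (0:ℂ)] fun z => z * deriv f z := by
    refine Filter.eventually_of_mem hmem fun z hz => ?_
    rcases eq_or_ne z 0 with rfl | hz0
    · simp [hω0, hf0]
    · have hfz : f z ≠ 0 := fun hc => hz0 (hfi hz h01 (hc.trans hf0.symm))
      show φ (ω z) * f z = z * deriv f z
      rw [← hωg z hz, hgf z hz hz0, div_mul_cancel₀ _ hfz]
  have hidF : (fun w => φ (δ w) * F w) =ᶠ[nhds (0:ℂ)] fun w => w * deriv F w := by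
    refine Filter.eventually_of_mem hmem fun w hw => ?_
    rcases eq_or_ne w 0 with rfl | hw0
    · simp [hδ0, hF0]
    · have hFw : F w ≠ 0 := fun hc => hw0 (hFi hw h01 (hc.trans hF0.symm))
      show φ (δ w) * F w = w * deriv F w
      rw [← hδG w hw, hGF w hw hw0, div_mul_cancel₀ _ hFw]
  have hgφa : AnalyticAt ℂ (fun z => φ (ω z)) 0 :=
    (show AnalyticAt ℂ φ (ω 0) by rw [hω0]; exact hφa).comp hωa
  have hGφa : AnalyticAt ℂ (fun w => φ (δ w)) 0 :=
    (show AnalyticAt ℂ φ (δ 0) by rw [hδ0]; exact hφa).comp hδa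
  obtain ⟨p1, p2⟩ := prodlem hgφa hfa hidf hf0 hf1 (show φ (ω 0) = 1 by rw [hω0, hφ0])
  obtain ⟨q1, q2⟩ := prodlem hGφa hFa hidF hF0 hF1 (show φ (δ 0) = 1 by rw [hδ0, hφ0])
  obtain ⟨r1, r2⟩ := complem hφa hωa hω0
  obtain ⟨s1, s2⟩ := complem hφa hδa hδ0
  rw [show iteratedDeriv 2 f 0 = deriv (deriv f) 0 by
    simp [iteratedDeriv_succ, iteratedDeriv_one]]
  set a2 := deriv (deriv f) 0 with ha2
  set a3 := deriv (deriv (deriv f)) 0 with ha3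
  set c := deriv ω 0 with hc
  set w2 := deriv (deriv ω) 0 with hw2
  set d := deriv δ 0 with hdd
  set d2 := deriv (deriv δ) 0 with hd2
  have hφ2' : deriv (deriv φ) 0 = 2 * (B₂:ℂ) := by
    rw [← hφ2]
    simp [iteratedDeriv_succ, iteratedDeriv_one]
  have e1 : (B₁:ℂ) * c = a2 / 2 := by rw [← hφ1, ← r1, p1]
  have e2 : (B₁:ℂ) * d = -(a2 / 2) := by
    rw [← hφ1, ← s1, q1, hF2]
    ring
  have hB1ne : (B₁:ℂ) ≠ 0 := by
    simp only [ne_eq, Complex.ofReal_eq_zero]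
    exact hB₁.ne'
  have hdc : d = -c := by
    have h := mul_eq_zero.mp (show (B₁:ℂ) * (d + c) = 0 by linear_combination e1 + e2)
    rcases h with h | h
    · exact absurd h hB1ne
    · linear_combination h
  rw [hφ1, hφ2'] at r2 s2
  rw [p1] at p2
  rw [q1, hF2, hF3] at q2
  have main : a2^2 = 4*((B₂ - B₁ : ℝ):ℂ)*c^2 + (B₁:ℂ)*(w2 + 2*c^2)
      + (B₁:ℂ)*(d2 + 2*d^2) := by
    push_cast
    linear_combination (r2 - p2) + (s2 - q2) + (2*((B₁:ℂ) - (B₂:ℂ))*(c - d))*hdc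
  have sw1 : ‖c‖ ≤ 1 := schwarz1 hωd hω0 hωm
  have sw2 : ‖w2 + 2*c^2‖ ≤ 2 := schwarz2 hωd hω0 hωm
  have sw3 : ‖d2 + 2*d^2‖ ≤ 2 := schwarz2 hδd hδ0 hδm
  have key : ‖a2‖ ^ 2 ≤ 4*|B₂ - B₁| + 4*B₁ := by
    have tri : ‖a2^2‖ ≤ ‖4*((B₂ - B₁ : ℝ):ℂ)*c^2‖
        + ‖(B₁:ℂ)*(w2 + 2*c^2)‖ + ‖(B₁:ℂ)*(d2 + 2*d^2)‖ := by
      rw [main]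
      exact (norm_add_le _ _).trans (add_le_add_left (norm_add_le _ _) _)
    have t1 : ‖4*((B₂ - B₁ : ℝ):ℂ)*c^2‖ = 4 * |B₂ - B₁| * (‖c‖)^2 := by
      rw [norm_mul, norm_mul, norm_pow, Complex.norm_real, Real.norm_eq_abs]
      norm_num
    have t2 : ‖(B₁:ℂ)*(w2 + 2*c^2)‖ = B₁ * ‖w2 + 2*c^2‖ := by
      rw [norm_mul, Complex.norm_real, Real.norm_eq_abs, abs_of_pos hB₁]
    have t3 : ‖(B₁:ℂ)*(d2 + 2*d^2)‖ = B₁ * ‖d2 + 2*d^2‖ := by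
      rw [norm_mul, Complex.norm_real, Real.norm_eq_abs, abs_of_pos hB₁]
    rw [t1, t2, t3] at tri
    rw [← norm_pow]
    have habs0 : (0:ℝ) ≤ ‖c‖ := norm_nonneg _
    have hcsq : ‖c‖ ^ 2 ≤ 1 := by nlinarith
    calc ‖a2^2‖
        ≤ 4 * |B₂ - B₁| * (‖c‖)^2 + B₁ * ‖w2 + 2*c^2‖
          + B₁ * ‖d2 + 2*d^2‖ := tri
      _ ≤ 4 * |B₂ - B₁| * 1 + B₁ * 2 + B₁ * 2 := by gcongr <;> positivity
      _ = 4 * |B₂ - B₁| + 4 * B₁ := by ring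
  rw [norm_div]
  have h2 : ‖(2:ℂ)‖ = 2 := by norm_num
  rw [h2]
  apply Real.le_sqrt_of_sq_le
  have ha0 : (0:ℝ) ≤ ‖a2‖ := norm_nonneg _
  rw [div_pow]
  nlinarith
end
end
end

section
/- Let f be a bi-univalent function of the class S*_σ(φ), i.e. f is bi-univalent with inverse extension F and both zf'(z)/f(z) ≺ φ(z) and wF'(w)/F(w) ≺ φ(w). Then the third Taylor coefficient of f satisfies |a₃| ≤ min{ B₁ + |B₂ − B₁|, (B₁² + B₁ + |B₂ − B₁|)/2, R }, where R = (1/4)(B₁ + 3B₁·max{1, |B₁ − 4B₂|/(3B₁)}). -/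
open Metric Set Complex

noncomputable section

open Function



/-- Derivatives agree on an open set where functions agree. -/
lemma eqOn_deriv {U : Set ℂ} (hU : IsOpen U) {A B : ℂ → ℂ} (h : EqOn A B U) :
    EqOn (deriv A) (deriv B) U := fun _ hz =>
  Filter.EventuallyEq.deriv_eq (Filter.eventuallyEq_of_mem (hU.mem_nhds hz) h)

/-- Schwarz–Pick type coefficient bounds at the origin. -/
lemma schwarzPick {ω : ℂ → ℂ} (hω : DifferentiableOn ℂ ω (ball 0 1)) (h0 : ω 0 = 0)
    (hm : MapsTo ω (ball 0 1) (ball 0 1)) :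
    ‖deriv ω 0‖ ≤ 1 ∧
      ‖deriv (deriv ω) 0‖ / 2 ≤ 1 - ‖deriv ω 0‖ ^ 2 := by
  have h01 : (0:ℂ) ∈ ball (0:ℂ) 1 := by simp
  have hm' : MapsTo ω (ball 0 1) (ball (ω 0) 1) := by rwa [h0]
  set ψ : ℂ → ℂ := dslope ω 0 with hψ
  have hψd : DifferentiableOn ℂ ψ (ball 0 1) :=
    (differentiableOn_dslope (isOpen_ball.mem_nhds h01)).mpr hω
  have hψle : ∀ z ∈ ball (0:ℂ) 1, ‖ψ z‖ ≤ 1 := by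
    intro z hz
    simpa using Complex.norm_dslope_le_div_of_mapsTo_ball hω (hm'.mono_right ball_subset_closedBall) hz
  have hψ0 : ψ 0 = deriv ω 0 := dslope_same ω 0
  have hωψ : ω = fun z => z * ψ z := by
    funext z
    have := sub_smul_dslope ω 0 z
    simp only [sub_zero, smul_eq_mul, h0] at this
    rw [← this]
  have hψa : AnalyticOnNhd ℂ ψ (ball 0 1) := hψd.analyticOnNhd isOpen_ball
  have hd2 : deriv (deriv ω) 0 = 2 * deriv ψ 0 := by
    have hder : EqOn (deriv ω) (fun z => ψ z + z * deriv ψ z) (ball 0 1) := by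
      intro z hz
      rw [hωψ]
      rw [deriv_fun_mul differentiableAt_fun_id ((hψa z hz).differentiableAt)]
      simp [mul_comm]
    have : deriv (deriv ω) 0 = deriv (fun z => ψ z + z * deriv ψ z) 0 :=
      Filter.EventuallyEq.deriv_eq (Filter.eventuallyEq_of_mem (isOpen_ball.mem_nhds h01) hder)
    rw [this, deriv_fun_add ((hψa 0 h01).differentiableAt)
      (differentiableAt_fun_id.fun_mul ((hψa.deriv_of_isOpen isOpen_ball 0 h01).differentiableAt)),
      deriv_fun_mul differentiableAt_fun_id ((hψa.deriv_of_isOpen isOpen_ball 0 h01).differentiableAt)]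
    simp [deriv_id'']
    ring
  have habs0 : ‖deriv ω 0‖ ≤ 1 := by rw [← hψ0]; exact hψle 0 h01
  refine ⟨habs0, ?_⟩
  rw [hd2, ← hψ0]
  have key : ‖deriv ψ 0‖ ≤ 1 - ‖ψ 0‖ ^ 2 := by
    by_cases hcc : ∃ z₀ ∈ ball (0:ℂ) 1, ‖ψ z₀‖ = 1
    · obtain ⟨z₀, hz₀, hz₀1⟩ := hcc
      have hmax : IsMaxOn (norm ∘ ψ) (ball 0 1) z₀ := by
        intro z hz
        simp only [comp_apply, hz₀1]
        exact hψle z hz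
      have hconst : EqOn ψ (const ℂ (ψ z₀)) (ball 0 1) :=
        Complex.eqOn_of_isPreconnected_of_isMaxOn_norm (convex_ball (0:ℂ) 1).isPreconnected
          isOpen_ball hψd hz₀ hmax
      have hψ00 : ψ 0 = ψ z₀ := hconst h01
      have hzero : deriv ψ 0 = 0 := by
        have := eqOn_deriv isOpen_ball hconst h01
        rw [this, show const ℂ (ψ z₀) = fun _ => ψ z₀ from rfl, deriv_const]
      rw [hzero, hψ00, hz₀1]
      simp
    · push_neg at hcc
      set a : ℂ := ψ 0 with ha
      have haa : ‖a‖ < 1 := lt_of_le_of_ne (hψle 0 h01) (hcc 0 h01)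
      have hden : ∀ z ∈ ball (0:ℂ) 1, (1 : ℂ) - (starRingEnd ℂ a) * ψ z ≠ 0 := by
        intro z hz
        have h2 : ‖(starRingEnd ℂ a) * ψ z‖ < 1 := by
          rw [norm_mul, Complex.norm_conj]
          calc ‖a‖ * ‖ψ z‖ ≤ ‖a‖ * 1 :=
                mul_le_mul_of_nonneg_left (hψle z hz) (norm_nonneg _)
            _ < 1 := by simpa using haa
        intro h
        rw [sub_eq_zero] at h
        rw [← h] at h2
        simp at h2
      set χ : ℂ → ℂ := fun z => (ψ z - a) / (1 - (starRingEnd ℂ a) * ψ z) with hχ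
      have hχd : DifferentiableOn ℂ χ (ball 0 1) := by
        apply DifferentiableOn.div
        · exact hψd.sub (differentiableOn_const a)
        · exact (differentiableOn_const _).sub ((differentiableOn_const _).mul hψd)
        · exact hden
      have hχ0 : χ 0 = 0 := by simp [hχ, ← ha]
      have hχm : MapsTo χ (ball 0 1) (ball 0 1) := by
        intro z hz
        rw [mem_ball_zero_iff]
        have hw : Complex.normSq (ψ z) < 1 := by
          have h3 := lt_of_le_of_ne (hψle z hz) (hcc z hz)
          nlinarith [Complex.sq_norm (ψ z), norm_nonneg (ψ z)]
        have hA : Complex.normSq a < 1 := by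
          nlinarith [Complex.sq_norm a, norm_nonneg a]
        have h1 : Complex.normSq (ψ z - a) < Complex.normSq (1 - (starRingEnd ℂ a) * ψ z) := by
          simp only [Complex.normSq_apply, Complex.sub_re, Complex.sub_im, Complex.mul_re,
            Complex.mul_im, Complex.one_re, Complex.one_im, Complex.conj_re, Complex.conj_im,
            Complex.normSq_apply] at hw hA ⊢
          nlinarith [mul_pos (sub_pos.2 hA) (sub_pos.2 hw)]
        have h1' : ‖ψ z - a‖ < ‖1 - (starRingEnd ℂ a) * ψ z‖ := by
          rw [Complex.norm_def, Complex.norm_def]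
          exact Real.sqrt_lt_sqrt (Complex.normSq_nonneg _) h1
        show ‖(ψ z - a) / (1 - (starRingEnd ℂ a) * ψ z)‖ < 1
        rw [norm_div, div_lt_one ((norm_pos_iff.mpr (hden z hz)))]
        exact h1'
      have hχle : ‖deriv χ 0‖ ≤ 1 :=
        Complex.norm_deriv_le_one_of_mapsTo_ball hχd (by rw [hχ0]; exact hχm.mono_right ball_subset_closedBall) one_pos
      have hpos : (0:ℝ) < 1 - ‖a‖ ^ 2 := by nlinarith [norm_nonneg a]
      have hv0 : (1:ℂ) - (starRingEnd ℂ a) * ψ 0 = ((1 - ‖a‖ ^ 2 : ℝ) : ℂ) := by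
        rw [← ha, mul_comm, Complex.mul_conj]
        push_cast [Complex.normSq_eq_norm_sq]
        ring
      have hdχ : deriv χ 0 = deriv ψ 0 / ((1 - ‖a‖ ^ 2 : ℝ) : ℂ) := by
        have hnum : DifferentiableAt ℂ (fun z => ψ z - a) 0 :=
          (hψa 0 h01).differentiableAt.sub_const a
        have hdenom : DifferentiableAt ℂ (fun z => (1:ℂ) - (starRingEnd ℂ a) * ψ z) 0 :=
          (differentiableAt_const _).sub ((differentiableAt_const _).mul (hψa 0 h01).differentiableAt)
        rw [hχ]
        rw [deriv_fun_div hnum hdenom (hden 0 h01)]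
        rw [deriv_sub_const, show ψ 0 - a = 0 by rw [← ha]; ring, hv0]
        have hne : ((1 - ‖a‖ ^ 2 : ℝ) : ℂ) ≠ 0 := by
          exact_mod_cast ne_of_gt hpos
        push_cast at hne ⊢
        field_simp
        ring
      rw [hdχ, norm_div] at hχle
      rw [Complex.norm_real, Real.norm_eq_abs, abs_of_pos hpos, div_le_one hpos] at hχle
      exact hχle
  calc ‖2 * deriv ψ 0‖ / 2 = ‖deriv ψ 0‖ := by
        rw [norm_mul]; simp
  _ ≤ 1 - ‖ψ 0‖ ^ 2 := key


lemma starlike_coeffs {U : Set ℂ} (hU : IsOpen U) (h0 : (0:ℂ) ∈ U)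
    {f k : ℂ → ℂ} (hf : AnalyticOnNhd ℂ f U) (hk : AnalyticOnNhd ℂ k U)
    (hf0 : f 0 = 0) (hf1 : deriv f 0 = 1) (hk0 : k 0 = 1)
    (heq : ∀ z ∈ U, k z * f z = z * deriv f z) :
    2 * deriv k 0 = deriv (deriv f) 0 ∧
    3 * deriv (deriv k) 0 + 3 * deriv k 0 * deriv (deriv f) 0 = 2 * deriv (deriv (deriv f)) 0 := by
  have hf1a : AnalyticOnNhd ℂ (deriv f) U := hf.deriv_of_isOpen hU
  have hf2a : AnalyticOnNhd ℂ (deriv (deriv f)) U := hf1a.deriv_of_isOpen hU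
  have hf3a : AnalyticOnNhd ℂ (deriv (deriv (deriv f))) U := hf2a.deriv_of_isOpen hU
  have hk1a : AnalyticOnNhd ℂ (deriv k) U := hk.deriv_of_isOpen hU
  have hk2a : AnalyticOnNhd ℂ (deriv (deriv k)) U := hk1a.deriv_of_isOpen hU
  have da : ∀ {A : ℂ → ℂ}, AnalyticOnNhd ℂ A U → ∀ z ∈ U, DifferentiableAt ℂ A z :=
    fun h z hz => (h z hz).differentiableAt
  have step1 : EqOn (fun z => deriv k z * f z + k z * deriv f z)
      (fun z => deriv f z + z * deriv (deriv f) z) U := by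
    intro z hz
    have h1 := eqOn_deriv hU (fun z hz => heq z hz) hz
    rw [deriv_fun_mul (da hk z hz) (da hf z hz),
      deriv_fun_mul differentiableAt_fun_id (da hf1a z hz), deriv_id''] at h1
    simpa using h1
  have step2 : EqOn (fun z => (deriv (deriv k) z * f z + deriv k z * deriv f z) +
      (deriv k z * deriv f z + k z * deriv (deriv f) z))
      (fun z => deriv (deriv f) z + (deriv (deriv f) z + z * deriv (deriv (deriv f)) z)) U := by
    intro z hz
    have h1 := eqOn_deriv hU step1 hz
    rw [deriv_fun_add ((da hk1a z hz).fun_mul (da hf z hz)) ((da hk z hz).fun_mul (da hf1a z hz)),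
      deriv_fun_mul (da hk1a z hz) (da hf z hz), deriv_fun_mul (da hk z hz) (da hf1a z hz),
      deriv_fun_add (da hf1a z hz) (differentiableAt_fun_id.fun_mul (da hf2a z hz)),
      deriv_fun_mul differentiableAt_fun_id (da hf2a z hz), deriv_id''] at h1
    simpa using h1
  have step3 := eqOn_deriv hU step2 h0
  rw [deriv_fun_add (((da hk2a 0 h0).fun_mul (da hf 0 h0)).fun_add ((da hk1a 0 h0).fun_mul (da hf1a 0 h0)))
      (((da hk1a 0 h0).fun_mul (da hf1a 0 h0)).fun_add ((da hk 0 h0).fun_mul (da hf2a 0 h0))),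
    deriv_fun_add ((da hk2a 0 h0).fun_mul (da hf 0 h0)) ((da hk1a 0 h0).fun_mul (da hf1a 0 h0)),
    deriv_fun_add ((da hk1a 0 h0).fun_mul (da hf1a 0 h0)) ((da hk 0 h0).fun_mul (da hf2a 0 h0)),
    deriv_fun_mul (da hk2a 0 h0) (da hf 0 h0), deriv_fun_mul (da hk1a 0 h0) (da hf1a 0 h0),
    deriv_fun_mul (da hk 0 h0) (da hf2a 0 h0),
    deriv_fun_add (da hf2a 0 h0) ((da hf2a 0 h0).fun_add (differentiableAt_fun_id.fun_mul (da hf3a 0 h0))),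
    deriv_fun_add (da hf2a 0 h0) (differentiableAt_fun_id.fun_mul (da hf3a 0 h0)),
    deriv_fun_mul differentiableAt_fun_id (da hf3a 0 h0), deriv_id''] at step3
  have e2 := step2 h0
  simp only [hf0, hf1, hk0, mul_zero, zero_mul, mul_one, one_mul, add_zero, zero_add] at e2 step3
  constructor
  · linear_combination e2
  · linear_combination step3


lemma deriv_comp'' {h₂ h : ℂ → ℂ} {x : ℂ} (hh₂ : DifferentiableAt ℂ h₂ (h x))
    (hh : DifferentiableAt ℂ h x) :
    deriv (fun z => h₂ (h z)) x = deriv h₂ (h x) * deriv h x := deriv_comp x hh₂ hh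

lemma comp_coeffs {U : Set ℂ} (hU : IsOpen U) (h0 : (0:ℂ) ∈ U)
    {φ ω : ℂ → ℂ} (hφ : AnalyticOnNhd ℂ φ (ball 0 1)) (hω : AnalyticOnNhd ℂ ω U)
    (hω0 : ω 0 = 0) (hmaps : MapsTo ω U (ball 0 1)) :
    deriv (fun z => φ (ω z)) 0 = deriv φ 0 * deriv ω 0 ∧
    deriv (deriv (fun z => φ (ω z))) 0 =
      deriv (deriv φ) 0 * deriv ω 0 ^ 2 + deriv φ 0 * deriv (deriv ω) 0 := by
  have hφ1 : AnalyticOnNhd ℂ (deriv φ) (ball 0 1) := hφ.deriv_of_isOpen isOpen_ball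
  have hφ2 : AnalyticOnNhd ℂ (deriv (deriv φ)) (ball 0 1) := hφ1.deriv_of_isOpen isOpen_ball
  have hω1 : AnalyticOnNhd ℂ (deriv ω) U := hω.deriv_of_isOpen hU
  have d1 : EqOn (deriv (fun z => φ (ω z))) (fun z => deriv φ (ω z) * deriv ω z) U := by
    intro z hz
    exact deriv_comp'' (hφ (ω z) (hmaps hz)).differentiableAt (hω z hz).differentiableAt
  constructor
  · have := d1 h0
    simp only at this
    rw [this, hω0]
  · have h2 : deriv (deriv (fun z => φ (ω z))) 0
        = deriv (fun z => deriv φ (ω z) * deriv ω z) 0 := (eqOn_deriv hU d1) h0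
    have hda : DifferentiableAt ℂ (fun z => deriv φ (ω z)) 0 :=
      DifferentiableAt.comp 0 (hφ1 (ω 0) (hmaps h0)).differentiableAt (hω 0 h0).differentiableAt
    rw [h2, deriv_fun_mul hda (hω1 0 h0).differentiableAt,
      deriv_comp'' (hφ1 (ω 0) (hmaps h0)).differentiableAt (hω 0 h0).differentiableAt, hω0]
    ring
  
lemma inverse_coeffs_s5 {U : Set ℂ} (hU : IsOpen U) (h0 : (0:ℂ) ∈ U)
    {f F : ℂ → ℂ} (hf : AnalyticOnNhd ℂ f U) (hF : AnalyticOnNhd ℂ F (ball 0 1))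
    (hmaps : MapsTo f U (ball 0 1)) (hf0 : f 0 = 0) (hf1 : deriv f 0 = 1)
    (hid : EqOn (fun z => F (f z)) id U) :
    deriv F 0 = 1 ∧ deriv (deriv F) 0 + deriv (deriv f) 0 = 0 ∧
    deriv (deriv (deriv F)) 0 + 3 * deriv (deriv F) 0 * deriv (deriv f) 0
      + deriv (deriv (deriv f)) 0 = 0 := by
  have hF1 : AnalyticOnNhd ℂ (deriv F) (ball 0 1) := hF.deriv_of_isOpen isOpen_ball
  have hF2 : AnalyticOnNhd ℂ (deriv (deriv F)) (ball 0 1) := hF1.deriv_of_isOpen isOpen_ball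
  have hF3 : AnalyticOnNhd ℂ (deriv (deriv (deriv F))) (ball 0 1) := hF2.deriv_of_isOpen isOpen_ball
  have hf1a : AnalyticOnNhd ℂ (deriv f) U := hf.deriv_of_isOpen hU
  have hf2a : AnalyticOnNhd ℂ (deriv (deriv f)) U := hf1a.deriv_of_isOpen hU
  have hf3a : AnalyticOnNhd ℂ (deriv (deriv (deriv f))) U := hf2a.deriv_of_isOpen hU
  have D1 : EqOn (fun z => deriv F (f z) * deriv f z) (fun _ => (1:ℂ)) U := by
    intro z hz
    have h1 := eqOn_deriv hU hid hz
    rw [deriv_comp'' (hF (f z) (hmaps hz)).differentiableAt (hf z hz).differentiableAt,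
      deriv_id] at h1
    simpa using h1
  have hT : ∀ z ∈ U, DifferentiableAt ℂ (fun z => deriv F (f z)) z := fun z hz =>
    DifferentiableAt.comp z (hF1 (f z) (hmaps hz)).differentiableAt (hf z hz).differentiableAt
  have hT2 : ∀ z ∈ U, DifferentiableAt ℂ (fun z => deriv (deriv F) (f z)) z := fun z hz =>
    DifferentiableAt.comp z (hF2 (f z) (hmaps hz)).differentiableAt (hf z hz).differentiableAt
  have D2 : EqOn (fun z => deriv (deriv F) (f z) * deriv f z * deriv f z
      + deriv F (f z) * deriv (deriv f) z) (fun _ => (0:ℂ)) U := by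
    intro z hz
    have h1 := eqOn_deriv hU D1 hz
    rw [deriv_fun_mul (hT z hz) (hf1a z hz).differentiableAt,
      deriv_comp'' (hF1 (f z) (hmaps hz)).differentiableAt (hf z hz).differentiableAt,
      deriv_const] at h1
    simpa using h1
  have D3 := eqOn_deriv hU D2 h0
  rw [deriv_fun_add (((hT2 0 h0).fun_mul (hf1a 0 h0).differentiableAt).fun_mul (hf1a 0 h0).differentiableAt)
      ((hT 0 h0).fun_mul (hf2a 0 h0).differentiableAt),
    deriv_fun_mul ((hT2 0 h0).fun_mul (hf1a 0 h0).differentiableAt) (hf1a 0 h0).differentiableAt,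
    deriv_fun_mul (hT2 0 h0) (hf1a 0 h0).differentiableAt,
    deriv_comp'' (hF2 (f 0) (hmaps h0)).differentiableAt (hf 0 h0).differentiableAt,
    deriv_fun_mul (hT 0 h0) (hf2a 0 h0).differentiableAt,
    deriv_comp'' (hF1 (f 0) (hmaps h0)).differentiableAt (hf 0 h0).differentiableAt,
    deriv_const] at D3
  have e1 := D1 h0
  have e2 := D2 h0
  simp only [hf0, hf1, mul_one, one_mul] at e1 e2 D3
  rw [e1, one_mul] at e2 D3
  refine ⟨e1, by linear_combination e2, by linear_combination D3⟩

set_option maxHeartbeats 2000000 in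
theorem stmt5
    (f F : ℂ → ℂ)
    (hf : DifferentiableOn ℂ f (ball 0 1)) (hf0 : f 0 = 0) (hf1 : deriv f 0 = 1)
    (hfi : InjOn f (ball 0 1))
    (hF : DifferentiableOn ℂ F (ball 0 1)) (hF0 : F 0 = 0) (hFi : InjOn F (ball 0 1))
    (hFf : ∀ᶠ z in nhds (0 : ℂ), F (f z) = z)
    (φ : ℂ → ℂ) (B₁ B₂ : ℝ)
    (hφ : DifferentiableOn ℂ φ (ball 0 1)) (hφ0 : φ 0 = 1)
    (hB₁ : 0 < B₁) (hφ1 : deriv φ 0 = (B₁ : ℂ)) (hφ2 : iteratedDeriv 2 φ 0 = 2 * (B₂ : ℂ))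
    (g : ℂ → ℂ) (hg0 : g 0 = 1)
    (hgf : ∀ z ∈ ball (0 : ℂ) 1, z ≠ 0 → g z = z * deriv f z / f z)
    (hgsub : Subordinate g φ)
    (G : ℂ → ℂ) (hG0 : G 0 = 1)
    (hGF : ∀ w ∈ ball (0 : ℂ) 1, w ≠ 0 → G w = w * deriv F w / F w)
    (hGsub : Subordinate G φ) :
    ‖iteratedDeriv 3 f 0 / 6‖ ≤ min (min (B₁ + |B₂ - B₁|) ((B₁ ^ 2 + B₁ + |B₂ - B₁|) / 2))
      ((1 / 4) * (B₁ + 3 * B₁ * max 1 (|B₁ - 4 * B₂| / (3 * B₁)))) := by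
  obtain ⟨ω, hωd, hω0, hωm', hgω⟩ := hgsub
  obtain ⟨τ, hτd, hτ0, hτm', hGτ⟩ := hGsub
  have h01 : (0:ℂ) ∈ ball (0:ℂ) 1 := by simp
  have hωm : MapsTo ω (ball 0 1) (ball 0 1) := fun z hz => hωm' z hz
  have hτm : MapsTo τ (ball 0 1) (ball 0 1) := fun z hz => hτm' z hz
  have hfa : AnalyticOnNhd ℂ f (ball 0 1) := hf.analyticOnNhd isOpen_ball
  have hFa : AnalyticOnNhd ℂ F (ball 0 1) := hF.analyticOnNhd isOpen_ball
  have hφa : AnalyticOnNhd ℂ φ (ball 0 1) := hφ.analyticOnNhd isOpen_ball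
  have hωa : AnalyticOnNhd ℂ ω (ball 0 1) := hωd.analyticOnNhd isOpen_ball
  have hτa : AnalyticOnNhd ℂ τ (ball 0 1) := hτd.analyticOnNhd isOpen_ball
  -- the function k = φ ∘ ω agrees with g on the ball
  have hka : AnalyticOnNhd ℂ (fun z => φ (ω z)) (ball 0 1) := hφa.comp hωa hωm
  have hk0 : φ (ω 0) = 1 := by rw [hω0, hφ0]
  have heqk : ∀ z ∈ ball (0:ℂ) 1, φ (ω z) * f z = z * deriv f z := by
    intro z hz
    rcases eq_or_ne z 0 with rfl | hne
    · simp [hf0]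
    · have hfz : f z ≠ 0 := by
        intro h
        exact hne (hfi hz h01 (by rw [h, hf0]))
      rw [← hgω z hz, hgf z hz hne, div_mul_cancel₀ _ hfz]
  have Hg := starlike_coeffs isOpen_ball h01 hfa hka hf0 hf1 hk0 heqk
  have Cg := comp_coeffs isOpen_ball h01 hφa hωa hω0 hωm
  -- inverse function relations
  obtain ⟨W, hWsub, hWopen, hW0⟩ := _root_.eventually_nhds_iff.mp hFf
  have hVopen : IsOpen (W ∩ (ball 0 1 ∩ f ⁻¹' (ball 0 1))) :=
    hWopen.inter (hf.continuousOn.isOpen_inter_preimage isOpen_ball isOpen_ball)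
  have hV0 : (0:ℂ) ∈ W ∩ (ball 0 1 ∩ f ⁻¹' (ball 0 1)) :=
    ⟨hW0, h01, by simp [hf0]⟩
  have hfV : AnalyticOnNhd ℂ f (W ∩ (ball 0 1 ∩ f ⁻¹' (ball 0 1))) :=
    hfa.mono fun z hz => hz.2.1
  have hfmapsV : MapsTo f (W ∩ (ball 0 1 ∩ f ⁻¹' (ball 0 1))) (ball 0 1) := fun z hz => hz.2.2
  have hidV : EqOn (fun z => F (f z)) id (W ∩ (ball 0 1 ∩ f ⁻¹' (ball 0 1))) :=
    fun z hz => hWsub z hz.1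
  have Hi := inverse_coeffs_s5 hVopen hV0 hfV hFa hfmapsV hf0 hf1 hidV
  -- the function K = φ ∘ τ agrees with G on the ball
  have hKa : AnalyticOnNhd ℂ (fun z => φ (τ z)) (ball 0 1) := hφa.comp hτa hτm
  have hK0 : φ (τ 0) = 1 := by rw [hτ0, hφ0]
  have heqK : ∀ w ∈ ball (0:ℂ) 1, φ (τ w) * F w = w * deriv F w := by
    intro w hw
    rcases eq_or_ne w 0 with rfl | hne
    · simp [hF0]
    · have hFw : F w ≠ 0 := by
        intro h
        exact hne (hFi hw h01 (by rw [h, hF0]))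
      rw [← hGτ w hw, hGF w hw hne, div_mul_cancel₀ _ hFw]
  have HG := starlike_coeffs isOpen_ball h01 hFa hKa hF0 Hi.1 hK0 heqK
  have CG := comp_coeffs isOpen_ball h01 hφa hτa hτ0 hτm
  -- Schwarz bounds
  have Sω := schwarzPick hωd hω0 hωm
  have Sτ := schwarzPick hτd hτ0 hτm
  -- second derivative of φ
  have dφ2 : deriv (deriv φ) 0 = 2 * (B₂ : ℂ) := by
    rw [← hφ2, show (2:ℕ) = 1 + 1 from rfl, iteratedDeriv_succ, iteratedDeriv_one]
  -- name all the equations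
  have e1 := Hg.1
  have e2 := Hg.2
  have e3 : deriv (fun z => φ (ω z)) 0 = (B₁:ℂ) * deriv ω 0 := by rw [Cg.1, hφ1]
  have e4 : deriv (deriv (fun z => φ (ω z))) 0
      = 2 * (B₂:ℂ) * deriv ω 0 ^ 2 + (B₁:ℂ) * deriv (deriv ω) 0 := by
    rw [Cg.2, hφ1, dφ2]
  have e5 := HG.1
  have e6 := HG.2
  have e7 : deriv (fun z => φ (τ z)) 0 = (B₁:ℂ) * deriv τ 0 := by rw [CG.1, hφ1]
  have e8 : deriv (deriv (fun z => φ (τ z))) 0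
      = 2 * (B₂:ℂ) * deriv τ 0 ^ 2 + (B₁:ℂ) * deriv (deriv τ) 0 := by
    rw [CG.2, hφ1, dφ2]
  have e9 := Hi.2.1
  have e10 := Hi.2.2
  have hB₁C : (B₁:ℂ) ≠ 0 := by exact_mod_cast hB₁.ne'
  -- derived complex identities
  have hf2 : deriv (deriv f) 0 = 2 * (B₁:ℂ) * deriv ω 0 := by linear_combination 2*e3 - e1
  have hF2 : deriv (deriv F) 0 = -(2 * (B₁:ℂ) * deriv ω 0) := by linear_combination e9 - hf2
  have hd1' : (B₁:ℂ) * (deriv τ 0 + deriv ω 0) = 0 := by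
    linear_combination (-1)*e7 - e3 + (1/2)*e5 + (1/2)*e1 + (1/2)*e9
  have hd1 : deriv τ 0 = -(deriv ω 0) := by
    rcases mul_eq_zero.mp hd1' with h | h
    · exact absurd h hB₁C
    · linear_combination h
  have hK1 : deriv (fun z => φ (τ z)) 0 = -((B₁:ℂ) * deriv ω 0) := by
    linear_combination e7 + (B₁:ℂ)*hd1
  have hF3 : deriv (deriv (deriv F)) 0 = 12 * (B₁:ℂ)^2 * deriv ω 0 ^2
      - deriv (deriv (deriv f)) 0 := by
    linear_combination e10 - 3*(deriv (deriv f) 0)*hF2 + 6*(B₁:ℂ)*(deriv ω 0)*hf2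
  have hT2 : deriv (deriv (deriv f)) 0 = 3*(B₁:ℂ)^2*(deriv ω 0)^2
      + 3*(B₂:ℂ)*(deriv ω 0)^2 + (3/2)*(B₁:ℂ)*(deriv (deriv ω) 0) := by
    linear_combination (-1/2)*e2 + (3/2)*e4 + (3/2)*(deriv (deriv f) 0)*e3
      + (3/2)*(B₁:ℂ)*(deriv ω 0)*hf2
  have hT2' : deriv (deriv (deriv f)) 0 = 9*(B₁:ℂ)^2*(deriv ω 0)^2
      - 3*(B₂:ℂ)*(deriv ω 0)^2 - (3/2)*(B₁:ℂ)*(deriv (deriv τ) 0) := by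
    linear_combination (1/2)*e6 + hF3 - (3/2)*e8
      - 3*(B₂:ℂ)*(deriv τ 0 - deriv ω 0)*hd1
      - (3/2)*(deriv (deriv F) 0)*hK1 + (3/2)*(B₁:ℂ)*(deriv ω 0)*hF2
  have hA3 : deriv (deriv (deriv f)) 0 = 6*(B₂:ℂ)*(deriv ω 0)^2
      + (9/4)*(B₁:ℂ)*(deriv (deriv ω) 0) + (3/4)*(B₁:ℂ)*(deriv (deriv τ) 0) := by
    linear_combination (3/2)*hT2 - (1/2)*hT2'
  -- pass to real estimates
  have hgoal : iteratedDeriv 3 f 0 = deriv (deriv (deriv f)) 0 := by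
    rw [show (3:ℕ) = 2 + 1 from rfl, iteratedDeriv_succ,
      show (2:ℕ) = 1 + 1 from rfl, iteratedDeriv_succ, iteratedDeriv_one]
  rw [hgoal]
  set u : ℝ := ‖deriv ω 0‖ with hu_def
  set p : ℝ := ‖deriv (deriv ω) 0‖ with hp_def
  set q : ℝ := ‖deriv (deriv τ) 0‖ with hq_def
  have hu0 : 0 ≤ u := norm_nonneg _
  have hp0 : 0 ≤ p := norm_nonneg _
  have hq0 : 0 ≤ q := norm_nonneg _
  have hu1 : u ≤ 1 := Sω.1
  have hu2 : u ^ 2 ≤ 1 := by nlinarith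
  have hp2 : p ≤ 2 * (1 - u^2) := by
    have := Sω.2
    linarith [this]
  have hq2 : q ≤ 2 * (1 - u^2) := by
    have h1 := Sτ.2
    rw [hd1] at h1
    simp only [norm_neg] at h1
    rw [← hu_def] at h1
    linarith [h1]
  have habs4 : ∀ a b c d : ℂ, ‖a + b + c + d‖
      ≤ ‖a‖ + ‖b‖ + ‖c‖ + ‖d‖ := by
    intro a b c d
    calc ‖a + b + c + d‖ ≤ ‖a + b + c‖ + ‖d‖ :=
          norm_add_le _ _
      _ ≤ (‖a + b‖ + ‖c‖) + ‖d‖ := by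
          linarith [norm_add_le (a + b) c]
      _ ≤ ‖a‖ + ‖b‖ + ‖c‖ + ‖d‖ := by
          linarith [norm_add_le a b]
  have habs3 : ∀ a b c : ℂ, ‖a + b + c‖
      ≤ ‖a‖ + ‖b‖ + ‖c‖ := by
    intro a b c
    calc ‖a + b + c‖ ≤ ‖a + b‖ + ‖c‖ := norm_add_le _ _
      _ ≤ ‖a‖ + ‖b‖ + ‖c‖ := by linarith [norm_add_le a b]
  have hmulr : ∀ (r : ℝ) (x : ℂ), ‖(r:ℂ) * x‖ = |r| * ‖x‖ := by
    intro r x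
    rw [norm_mul, Complex.norm_real, Real.norm_eq_abs]
  have hsq : ‖(deriv ω 0)^2‖ = u^2 := by rw [norm_pow]
  refine le_min (le_min ?_ ?_) ?_
  · -- bound A : B₁ + |B₂ - B₁|
    have hdec : deriv (deriv (deriv f)) 0 / 6 = (B₁:ℂ) * (deriv ω 0)^2
        + ((3*B₁/8 : ℝ):ℂ) * (deriv (deriv ω) 0) + ((B₁/8 : ℝ):ℂ) * (deriv (deriv τ) 0)
        + (((B₂ - B₁ : ℝ)):ℂ) * (deriv ω 0)^2 := by
      push_cast
      linear_combination (1/6) * hA3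
    rw [hdec]
    have h1 := habs4 ((B₁:ℂ) * (deriv ω 0)^2) (((3*B₁/8 : ℝ):ℂ) * (deriv (deriv ω) 0))
      (((B₁/8 : ℝ):ℂ) * (deriv (deriv τ) 0)) ((((B₂ - B₁ : ℝ)):ℂ) * (deriv ω 0)^2)
    rw [hmulr, hmulr, hmulr, hmulr, hsq] at h1
    have hb1 : |B₁| = B₁ := abs_of_pos hB₁
    have hb2 : |3*B₁/8| = 3*B₁/8 := abs_of_pos (by linarith)
    have hb3 : |B₁/8| = B₁/8 := abs_of_pos (by linarith)
    rw [hb1, hb2, hb3] at h1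
    have hBp : B₁ * p ≤ B₁ * (2*(1-u^2)) := mul_le_mul_of_nonneg_left hp2 hB₁.le
    have hBq : B₁ * q ≤ B₁ * (2*(1-u^2)) := mul_le_mul_of_nonneg_left hq2 hB₁.le
    have hAu : |B₂ - B₁| * u^2 ≤ |B₂ - B₁| * 1 :=
      mul_le_mul_of_nonneg_left hu2 (abs_nonneg _)
    calc ‖_‖ ≤ B₁ * u^2 + 3*B₁/8 * p + B₁/8 * q + |B₂ - B₁| * u^2 := h1
      _ ≤ B₁ + |B₂ - B₁| := by nlinarith
  · -- bound B
    have hdec : deriv (deriv (deriv f)) 0 / 6 = ((B₁^2/2 : ℝ):ℂ) * (deriv ω 0)^2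
        + ((B₁/2 : ℝ):ℂ) * (deriv ω 0)^2 + ((B₁/4 : ℝ):ℂ) * (deriv (deriv ω) 0)
        + (((B₂ - B₁)/2 : ℝ):ℂ) * (deriv ω 0)^2 := by
      push_cast
      linear_combination (1/6) * hT2
    rw [hdec]
    have h1 := habs4 (((B₁^2/2 : ℝ):ℂ) * (deriv ω 0)^2) (((B₁/2 : ℝ):ℂ) * (deriv ω 0)^2)
      (((B₁/4 : ℝ):ℂ) * (deriv (deriv ω) 0)) ((((B₂ - B₁)/2 : ℝ):ℂ) * (deriv ω 0)^2)
    rw [hmulr, hmulr, hmulr, hmulr, hsq] at h1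
    have hb1 : |B₁^2/2| = B₁^2/2 := abs_of_pos (by positivity)
    have hb2 : |B₁/2| = B₁/2 := abs_of_pos (by linarith)
    have hb3 : |B₁/4| = B₁/4 := abs_of_pos (by linarith)
    have hb4 : |(B₂ - B₁)/2| = |B₂ - B₁|/2 := by
      rw [abs_div]; norm_num
    rw [hb1, hb2, hb3, hb4] at h1
    have hBp : B₁ * p ≤ B₁ * (2*(1-u^2)) := mul_le_mul_of_nonneg_left hp2 hB₁.le
    have hAu : |B₂ - B₁| * u^2 ≤ |B₂ - B₁| * 1 :=
      mul_le_mul_of_nonneg_left hu2 (abs_nonneg _)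
    have hB2u : B₁^2 * u^2 ≤ B₁^2 * 1 :=
      mul_le_mul_of_nonneg_left hu2 (sq_nonneg _)
    calc ‖_‖ ≤ B₁^2/2 * u^2 + B₁/2 * u^2 + B₁/4 * p + |B₂ - B₁|/2 * u^2 := h1
      _ ≤ (B₁ ^ 2 + B₁ + |B₂ - B₁|) / 2 := by nlinarith [hBp, hAu, hB2u]
  · -- bound C
    have hdec : deriv (deriv (deriv f)) 0 / 6 = ((B₂ : ℝ):ℂ) * (deriv ω 0)^2
        + ((3*B₁/8 : ℝ):ℂ) * (deriv (deriv ω) 0) + ((B₁/8 : ℝ):ℂ) * (deriv (deriv τ) 0) := by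
      push_cast
      linear_combination (1/6) * hA3
    rw [hdec]
    have h1 := habs3 (((B₂:ℝ):ℂ) * (deriv ω 0)^2) (((3*B₁/8 : ℝ):ℂ) * (deriv (deriv ω) 0))
      (((B₁/8 : ℝ):ℂ) * (deriv (deriv τ) 0))
    rw [hmulr, hmulr, hmulr, hsq] at h1
    have hb2 : |3*B₁/8| = 3*B₁/8 := abs_of_pos (by linarith)
    have hb3 : |B₁/8| = B₁/8 := abs_of_pos (by linarith)
    rw [hb2, hb3] at h1
    have hM1 : (1:ℝ) ≤ max 1 (|B₁ - 4 * B₂| / (3 * B₁)) := le_max_left _ _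
    have hM2 : |B₁ - 4 * B₂| / (3 * B₁) ≤ max 1 (|B₁ - 4 * B₂| / (3 * B₁)) := le_max_right _ _
    have hZ1 : B₁ ≤ (1 / 4) * (B₁ + 3 * B₁ * max 1 (|B₁ - 4 * B₂| / (3 * B₁))) := by
      have hh := mul_le_mul_of_nonneg_left hM1 (by linarith : (0:ℝ) ≤ 3 * B₁)
      linarith
    have hZ2 : |B₂| ≤ (1 / 4) * (B₁ + 3 * B₁ * max 1 (|B₁ - 4 * B₂| / (3 * B₁))) := by
      have h3 : |B₁ - 4 * B₂| ≤ 3 * B₁ * max 1 (|B₁ - 4 * B₂| / (3 * B₁)) := by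
        have := mul_le_mul_of_nonneg_left hM2 (by linarith : (0:ℝ) ≤ 3 * B₁)
        rwa [mul_div_cancel₀ _ (by linarith : (3:ℝ) * B₁ ≠ 0)] at this
      have h4 : 4 * |B₂| - B₁ ≤ |B₁ - 4 * B₂| := by
        have h5 := abs_sub_abs_le_abs_sub (4 * B₂) B₁
        rw [abs_sub_comm] at h5
        rw [abs_of_pos hB₁] at h5
        calc 4 * |B₂| - B₁ = |4 * B₂| - B₁ := by rw [abs_mul]; norm_num
          _ ≤ |B₁ - 4 * B₂| := h5
      linarith
    have hBp : B₁ * p ≤ B₁ * (2*(1-u^2)) := mul_le_mul_of_nonneg_left hp2 hB₁.le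
    have hBq : B₁ * q ≤ B₁ * (2*(1-u^2)) := mul_le_mul_of_nonneg_left hq2 hB₁.le
    calc ‖_‖ ≤ |B₂| * u^2 + 3*B₁/8 * p + B₁/8 * q := h1
      _ ≤ (1 / 4) * (B₁ + 3 * B₁ * max 1 (|B₁ - 4 * B₂| / (3 * B₁))) := by
        have hh1 := mul_le_mul_of_nonneg_right hZ2 (sq_nonneg u)
        have hh2 := mul_le_mul_of_nonneg_left hu2
          (by linarith : (0:ℝ) ≤ (1 / 4) * (B₁ + 3 * B₁ * max 1 (|B₁ - 4 * B₂| / (3 * B₁))) - B₁)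
        nlinarith [hh1, hh2, hBp, hBq]
end
end
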